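/- arXiv:2410.21102 — 8 statements merged into one kernel-verified Lean document; each statement's English description precedes it below -/
import Mathlib

section
/- For every countable family {π_i : i ∈ ℕ} of permutations of ℕ, there exists an infinite coinfinite set A ⊆ ℕ such that d(π_i[A]) = d(A) = 0 for every i ∈ ℕ. In particular, the density number 𝔡𝔡 is uncountable. -/
open Filter Topology

open scoped Classical in
noncomputable def cnt (A : Set ℕ) (n : ℕ) : ℕ :=
  ((Finset.range n).filter (fun m => m ∈ A)).card

def dens (A : Set ℕ) (r : ℝ) : Prop :=
  Tendsto (fun n => (cnt A n : ℝ) / n) atTop (𝓝 r)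

lemma bad_finite (π : ℕ → Equiv.Perm ℕ) (k p : ℕ) :
    {m : ℕ | m ≤ p ∨ m < k ^ 2 ∨ ∃ i ≤ k, (π i) m < k ^ 2}.Finite := by
  have h3 : {m : ℕ | ∃ i ≤ k, (π i) m < k ^ 2}.Finite := by
    have : {m : ℕ | ∃ i ≤ k, (π i) m < k ^ 2}
        = ⋃ i ∈ Set.Iic k, (π i) ⁻¹' (Set.Iio (k ^ 2)) := by
      ext m; simp [Set.mem_Iic]
    rw [this]
    exact (Set.finite_Iic k).biUnion (fun i _ =>
      (Set.finite_Iio _).preimage (Equiv.injective _).injOn)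
  exact (((Set.finite_Iic p).union ((Set.finite_Iio (k ^ 2)).union h3)).subset
    (by intro m hm; simpa using hm))

noncomputable def mySeq (π : ℕ → Equiv.Perm ℕ) : ℕ → ℕ
  | 0 => ((bad_finite π 0 0).infinite_compl).nonempty.choose
  | (k + 1) => ((bad_finite π (k + 1) (mySeq π k)).infinite_compl).nonempty.choose

lemma mySeq_spec (π : ℕ → Equiv.Perm ℕ) (k : ℕ) :
    (k = 0 ∨ mySeq π (k - 1) < mySeq π k) ∧ k ^ 2 ≤ mySeq π k ∧
      ∀ i ≤ k, k ^ 2 ≤ (π i) (mySeq π k) := by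
  cases k with
  | zero =>
    have h := ((bad_finite π 0 0).infinite_compl).nonempty.choose_spec
    simp only [Set.mem_compl_iff, Set.mem_setOf_eq, not_or] at h
    exact ⟨Or.inl rfl, by simp, fun i _ => Nat.zero_le _⟩
  | succ k =>
    have h := ((bad_finite π (k + 1) (mySeq π k)).infinite_compl).nonempty.choose_spec
    simp only [Set.mem_compl_iff, Set.mem_setOf_eq, not_or, not_lt, not_le,
      not_exists] at h
    obtain ⟨h1, h2, h3⟩ := h
    refine ⟨Or.inr ?_, h2, fun i hi => ?_⟩
    · simpa [mySeq] using h1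
    · have := h3 i
      simp only [not_and, not_lt] at this
      exact this hi

lemma mySeq_strictMono (π : ℕ → Equiv.Perm ℕ) : StrictMono (mySeq π) := by
  apply strictMono_nat_of_lt_succ
  intro n
  have h := (mySeq_spec π (n + 1)).1
  rcases h with h | h
  · omega
  · simpa using h

lemma cnt_range_le (f : ℕ → ℕ) (n c : ℕ) (h : ∀ k, f k < n → k < c) :
    cnt (Set.range f) n ≤ c := by
  classical
  have hsub : ((Finset.range n).filter (fun m => m ∈ Set.range f))
      ⊆ (Finset.range c).image f := by
    intro m hm
    simp only [Finset.mem_filter, Finset.mem_range, Set.mem_range] at hm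
    obtain ⟨hmn, k, hk⟩ := hm
    simp only [Finset.mem_image, Finset.mem_range]
    exact ⟨k, h k (hk ▸ hmn), hk⟩
  calc cnt (Set.range f) n ≤ ((Finset.range c).image f).card :=
        Finset.card_le_card hsub
    _ ≤ c := (Finset.card_image_le).trans (by simp)

lemma dens_zero_of_sqrt (S : Set ℕ) (c : ℕ) (h : ∀ n, cnt S n ≤ c + Nat.sqrt n) :
    dens S 0 := by
  have hbig : Tendsto (fun n : ℕ => ((c : ℝ) + Real.sqrt n) / n) atTop (𝓝 0) := by
    have h1 : Tendsto (fun n : ℕ => (c : ℝ) / n) atTop (𝓝 0) :=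
      tendsto_const_div_atTop_nhds_zero_nat (c : ℝ)
    have h2 : Tendsto (fun n : ℕ => Real.sqrt n / n) atTop (𝓝 0) := by
      have hs : Tendsto (fun n : ℕ => Real.sqrt n) atTop atTop := by
        apply tendsto_atTop_atTop.mpr
        intro b
        refine ⟨⌈b⌉₊ ^ 2, fun n hn => ?_⟩
        calc b ≤ (⌈b⌉₊ : ℝ) := Nat.le_ceil b
          _ = Real.sqrt ((⌈b⌉₊ : ℝ) ^ 2) := (Real.sqrt_sq (by positivity)).symm
          _ ≤ Real.sqrt n := Real.sqrt_le_sqrt (by exact_mod_cast hn)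
      have := (tendsto_inv_atTop_zero).comp hs
      refine this.congr' ?_
      filter_upwards [eventually_ge_atTop 1] with n hn
      have hn0 : (0 : ℝ) < n := by positivity
      have hs0 : (0 : ℝ) < Real.sqrt n := Real.sqrt_pos.mpr hn0
      have : Real.sqrt n / n = (Real.sqrt n)⁻¹ := by
        rw [inv_eq_one_div, div_eq_div_iff hn0.ne' hs0.ne', one_mul]
        exact Real.mul_self_sqrt hn0.le
      simp [Function.comp, this]
    have := h1.add h2
    simp only [add_zero] at this
    exact this.congr (fun n => (add_div _ _ _).symm)
  refine tendsto_of_tendsto_of_tendsto_of_le_of_le' tendsto_const_nhds hbig ?_ ?_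
  · filter_upwards with n; positivity
  · filter_upwards [eventually_ge_atTop 1] with n hn
    have hn0 : (0 : ℝ) < n := by exact_mod_cast hn
    have hle := h n
    have hsq : (Nat.sqrt n : ℝ) ≤ Real.sqrt n := by
      apply Real.le_sqrt_of_sq_le
      exact_mod_cast Nat.sqrt_le' n
    have hc : (cnt S n : ℝ) ≤ (c : ℝ) + Real.sqrt n := by
      calc (cnt S n : ℝ) ≤ (c : ℝ) + (Nat.sqrt n : ℝ) := by exact_mod_cast hle
        _ ≤ (c : ℝ) + Real.sqrt n := by linarith
    exact div_le_div_of_nonneg_right hc hn0.le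

theorem stmt1 (π : ℕ → Equiv.Perm ℕ) :
    ∃ A : Set ℕ, A.Infinite ∧ Aᶜ.Infinite ∧ dens A 0 ∧ ∀ i : ℕ, dens ((π i) '' A) 0 := by
  classical
  set a := mySeq π with ha
  have hmono := mySeq_strictMono π
  refine ⟨Set.range a, Set.infinite_range_of_injective hmono.injective, ?compl, ?dA, ?dI⟩
  case dA =>
    -- dens (range a) 0
    apply dens_zero_of_sqrt _ 1
    intro n
    apply cnt_range_le
    intro k hk
    have hk2 : k ^ 2 ≤ a k := (mySeq_spec π k).2.1
    have : k * k < n := by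
      have := hk2.trans_lt hk
      nlinarith [this]
    have : k ≤ Nat.sqrt n := Nat.le_sqrt.mpr (le_of_lt this)
    omega
  case dI =>
    intro i
    have : (π i) '' Set.range a = Set.range ((π i) ∘ a) := (Set.range_comp _ _).symm
    rw [this]
    apply dens_zero_of_sqrt _ (i + 1)
    intro n
    apply cnt_range_le
    intro k hk
    by_cases hik : k < i
    · omega
    · push_neg at hik
      have hk2 : k ^ 2 ≤ (π i) (a k) := (mySeq_spec π k).2.2 i hik
      have hlt : k * k < n := by
        have := hk2.trans_lt hk
        nlinarith [this]
      have : k ≤ Nat.sqrt n := Nat.le_sqrt.mpr (le_of_lt hlt)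
      omega
  case compl =>
    -- complement infinite
    have hdens : dens (Set.range a) 0 := by
      apply dens_zero_of_sqrt _ 1
      intro n
      apply cnt_range_le
      intro k hk
      have hk2 : k ^ 2 ≤ a k := (mySeq_spec π k).2.1
      have hlt : k * k < n := by
        have := hk2.trans_lt hk
        nlinarith [this]
      have : k ≤ Nat.sqrt n := Nat.le_sqrt.mpr (le_of_lt hlt)
      omega
    by_contra hfin
    rw [Set.not_infinite] at hfin
    set C := hfin.toFinset.card with hC
    have hcnt : ∀ n, n ≤ cnt (Set.range a) n + C := by
      intro n
      have hpart := Finset.card_filter_add_card_filter_not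
        (s := Finset.range n) (p := fun m => m ∈ Set.range a)
      have hle : ((Finset.range n).filter (fun m => ¬ m ∈ Set.range a)).card ≤ C := by
        apply Finset.card_le_card
        intro m hm
        simp only [Finset.mem_filter] at hm
        rw [Set.Finite.mem_toFinset]
        exact hm.2
      have : cnt (Set.range a) n
          + ((Finset.range n).filter (fun m => ¬ m ∈ Set.range a)).card = n := by
        simpa [cnt] using hpart
      omega
    have hlow : Tendsto (fun n : ℕ => ((n : ℝ) - C) / n) atTop (𝓝 1) := by
      have h1 : Tendsto (fun n : ℕ => (C : ℝ) / n) atTop (𝓝 0) :=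
        tendsto_const_div_atTop_nhds_zero_nat (C : ℝ)
      have : Tendsto (fun n : ℕ => 1 - (C : ℝ) / n) atTop (𝓝 (1 - 0)) :=
        tendsto_const_nhds.sub h1
      rw [sub_zero] at this
      refine this.congr' ?_
      filter_upwards [eventually_ge_atTop 1] with n hn
      have hn0 : (n : ℝ) ≠ 0 := by positivity
      field_simp
    have : (1 : ℝ) ≤ 0 := by
      refine le_of_tendsto_of_tendsto' hlow hdens ?_
      intro n
      rcases Nat.eq_zero_or_pos n with rfl | hn
      · simp
      · have hn0 : (0 : ℝ) < n := by exact_mod_cast hn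
        have h1 := hcnt n
        have h2 : (n : ℝ) ≤ (cnt (Set.range a) n : ℝ) + C := by exact_mod_cast h1
        have h3 : (n : ℝ) - C ≤ (cnt (Set.range a) n : ℝ) := by linarith
        exact div_le_div_of_nonneg_right h3 hn0.le
    linarith
end

section
/- Given any infinite coinfinite set A ⊆ ℕ and any r ∈ [0,1], there exists a permutation π of ℕ such that d(π[A]) = r. -/
open Filter Topology

open scoped Classical

noncomputable def B0 (r : ℝ) : Set ℕ := {n | ⌊(n:ℝ)*r⌋ < ⌊((n:ℝ)+1)*r⌋}
def Ev : Set ℕ := Set.range fun k => (2*k)^2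
def Od : Set ℕ := Set.range fun k => (2*k+1)^2
noncomputable def Bfin (r : ℝ) : Set ℕ := (B0 r ∪ Ev) \ Od

lemma cnt_succ (A : Set ℕ) (n : ℕ) :
    cnt A (n+1) = cnt A n + (if n ∈ A then 1 else 0) := by
  unfold cnt
  rw [Finset.range_add_one, Finset.filter_insert]
  split <;> simp [Finset.card_insert_of_notMem, Finset.notMem_range_self]

lemma cnt_B0 (r : ℝ) (hr0 : 0 ≤ r) (hr1 : r ≤ 1) (n : ℕ) :
    (cnt (B0 r) n : ℤ) = ⌊(n:ℝ)*r⌋ := by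
  induction n with
  | zero => simp [cnt]
  | succ n ih =>
    rw [cnt_succ]
    have hmono : ⌊(n:ℝ)*r⌋ ≤ ⌊((n:ℝ)+1)*r⌋ := by
      apply Int.floor_le_floor; nlinarith
    have hle : ⌊((n:ℝ)+1)*r⌋ ≤ ⌊(n:ℝ)*r⌋ + 1 := by
      have : ((n:ℝ)+1)*r ≤ (n:ℝ)*r + 1 := by nlinarith
      calc ⌊((n:ℝ)+1)*r⌋ ≤ ⌊(n:ℝ)*r + 1⌋ := Int.floor_le_floor this
        _ = ⌊(n:ℝ)*r⌋ + 1 := by rw [Int.floor_add_one]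
    by_cases h : n ∈ B0 r
    · simp only [h, if_pos]
      have := h
      simp only [B0, Set.mem_setOf_eq] at this
      push_cast [ih]
      push_cast
      omega
    · simp only [h, if_neg, not_false_iff]
      have : ¬ (⌊(n:ℝ)*r⌋ < ⌊((n:ℝ)+1)*r⌋) := h
      push_cast [ih]
      push_cast
      omega


lemma cnt_mono {X Y : Set ℕ} (h : X ⊆ Y) (n : ℕ) : cnt X n ≤ cnt Y n := by
  unfold cnt
  refine Finset.card_le_card ?_
  intro m hm
  simp only [Finset.mem_filter] at *
  exact ⟨hm.1, h hm.2⟩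

lemma cnt_union_le (X Y : Set ℕ) (n : ℕ) : cnt (X ∪ Y) n ≤ cnt X n + cnt Y n := by
  unfold cnt
  refine le_trans (Finset.card_le_card ?_) (Finset.card_union_le _ _)
  intro m hm
  simp only [Finset.mem_filter, Finset.mem_union, Set.mem_union] at *
  tauto

lemma cnt_le_diff_add (X O : Set ℕ) (n : ℕ) : cnt X n ≤ cnt (X \ O) n + cnt O n := by
  unfold cnt
  refine le_trans (Finset.card_le_card ?_) (Finset.card_union_le _ _)
  intro m hm
  simp only [Finset.mem_filter, Finset.mem_union, Set.mem_diff] at *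
  tauto

lemma cnt_sq_le (c d n : ℕ) (hc : 0 < c) : cnt (Set.range fun k => (c*k+d)^2) n ≤ Nat.sqrt n + 1 := by
  unfold cnt
  refine le_trans (Finset.card_le_card (t := (Finset.range (Nat.sqrt n + 1)).image fun k => (c*k+d)^2) ?_) ?_
  · intro m hm
    simp only [Finset.mem_filter, Finset.mem_range, Set.mem_range] at hm
    obtain ⟨hlt, k, hk⟩ := hm
    simp only [Finset.mem_image, Finset.mem_range]
    refine ⟨k, ?_, hk⟩
    have h1 : k ≤ c*k+d := by nlinarith
    have h2 : (c*k+d)^2 ≤ n := by omega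
    have := Nat.sqrt_le_sqrt h2
    rw [Nat.sqrt_eq' ] at this
    omega
  · exact le_trans (Finset.card_image_le) (by simp)


lemma nat_sqrt_atTop : Tendsto (fun n : ℕ => Nat.sqrt n) atTop atTop := by
  refine tendsto_atTop_atTop.mpr (fun b => ⟨b*b, fun n hn => ?_⟩)
  calc b = Nat.sqrt (b*b) := (Nat.sqrt_eq b).symm
    _ ≤ Nat.sqrt n := Nat.sqrt_le_sqrt hn

lemma sqrt_div_tendsto : Tendsto (fun n : ℕ => ((Nat.sqrt n : ℝ) + 2) / n) atTop (𝓝 0) := by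
  have h1 : Tendsto (fun n : ℕ => ((Nat.sqrt n : ℕ) : ℝ)) atTop atTop :=
    tendsto_natCast_atTop_atTop.comp nat_sqrt_atTop
  have h2 : Tendsto (fun n : ℕ => (3:ℝ) / (Nat.sqrt n : ℝ)) atTop (𝓝 0) :=
    tendsto_const_nhds.div_atTop h1
  refine squeeze_zero' ?_ ?_ h2
  · filter_upwards [eventually_ge_atTop 1] with n hn
    positivity
  · filter_upwards [eventually_ge_atTop 1] with n hn
    have hs : 1 ≤ Nat.sqrt n := by
      calc 1 = Nat.sqrt 1 := rfl
        _ ≤ Nat.sqrt n := Nat.sqrt_le_sqrt hn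
    have hs0 : (0:ℝ) < (Nat.sqrt n : ℝ) := by exact_mod_cast hs
    have hn0 : (0:ℝ) < (n : ℝ) := by exact_mod_cast hn
    rw [div_le_div_iff₀ hn0 hs0]
    have e1' : Nat.sqrt n * Nat.sqrt n ≤ n := by
      have := Nat.sqrt_le' n; nlinarith [this]
    have e2 : Nat.sqrt n ≤ n := Nat.sqrt_le_self n
    have f1 : ((Nat.sqrt n : ℝ)) * (Nat.sqrt n : ℝ) ≤ n := by exact_mod_cast e1'
    have f2 : ((Nat.sqrt n : ℝ)) ≤ n := by exact_mod_cast e2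
    nlinarith

lemma dens_Bfin (r : ℝ) (hr0 : 0 ≤ r) (hr1 : r ≤ 1) : dens (Bfin r) r := by
  have key : ∀ n : ℕ, 1 ≤ n → |(cnt (Bfin r) n : ℝ) / n - r| ≤ ((Nat.sqrt n : ℝ) + 2) / n := by
    intro n hn
    have hn0 : (0:ℝ) < n := by exact_mod_cast hn
    set a := cnt (Bfin r) n with ha
    set b := cnt (B0 r) n with hb
    have hup : a ≤ b + (Nat.sqrt n + 1) := by
      calc a ≤ cnt (B0 r ∪ Ev) n := cnt_mono Set.diff_subset n
        _ ≤ b + cnt Ev n := cnt_union_le _ _ n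
        _ ≤ b + (Nat.sqrt n + 1) := by
            have := cnt_sq_le 2 0 n (by norm_num)
            simp only [add_zero] at this
            have h2 : cnt Ev n ≤ Nat.sqrt n + 1 := by unfold Ev; convert this using 3
            omega
    have hlo : b ≤ a + (Nat.sqrt n + 1) := by
      calc b ≤ cnt (B0 r ∪ Ev) n := cnt_mono Set.subset_union_left n
        _ ≤ a + cnt Od n := cnt_le_diff_add _ _ n
        _ ≤ a + (Nat.sqrt n + 1) := by
            have := cnt_sq_le 2 1 n (by norm_num)
            have h2 : cnt Od n ≤ Nat.sqrt n + 1 := by unfold Od; convert this using 3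
            omega
    have hbfl : (b : ℝ) = (⌊(n:ℝ)*r⌋ : ℤ) := by exact_mod_cast cnt_B0 r hr0 hr1 n
    have hb1 : (b : ℝ) ≤ (n:ℝ)*r := hbfl ▸ Int.floor_le _
    have hb2 : (n:ℝ)*r - 1 ≤ (b:ℝ) := by
      have := Int.lt_floor_add_one ((n:ℝ)*r)
      rw [← hbfl] at this; linarith
    have hup' : (a:ℝ) ≤ (b:ℝ) + (Nat.sqrt n + 1) := by exact_mod_cast hup
    have hlo' : (b:ℝ) ≤ (a:ℝ) + (Nat.sqrt n + 1) := by exact_mod_cast hlo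
    have hnum : |(a:ℝ) - (n:ℝ)*r| ≤ (Nat.sqrt n : ℝ) + 2 := by
      rw [abs_le]; constructor <;> linarith
    have heq : (a:ℝ)/n - r = ((a:ℝ) - (n:ℝ)*r)/n := by field_simp
    rw [heq, abs_div, abs_of_pos hn0]
    gcongr
  have h0 := sqrt_div_tendsto
  have : Tendsto (fun n : ℕ => (cnt (Bfin r) n : ℝ)/n - r) atTop (𝓝 0) := by
    refine squeeze_zero_norm' ?_ h0
    filter_upwards [eventually_ge_atTop 1] with n hn
    simpa using key n hn
  have := this.add_const r
  simpa [dens] using this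


lemma Ev_Od_disjoint : Disjoint Ev Od := by
  rw [Set.disjoint_left]
  rintro x ⟨k, rfl⟩ ⟨j, hj⟩
  simp only at hj
  have : 2*j+1 = 2*k := by nlinarith
  omega

lemma Ev_subset_Bfin (r : ℝ) : Ev ⊆ Bfin r := fun x hx =>
  ⟨Or.inr hx, fun hO => Set.disjoint_left.mp Ev_Od_disjoint hx hO⟩

lemma Od_subset_compl (r : ℝ) : Od ⊆ (Bfin r)ᶜ := fun x hx hB => hB.2 hx

lemma Ev_infinite : Ev.Infinite := by
  apply Set.infinite_range_of_injective
  intro a b hab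
  simp only at hab
  nlinarith [hab]

lemma Od_infinite : Od.Infinite := by
  apply Set.infinite_range_of_injective
  intro a b hab
  simp only at hab
  nlinarith [hab]

lemma Bfin_infinite (r : ℝ) : (Bfin r).Infinite :=
  Ev_infinite.mono (Ev_subset_Bfin r)

lemma Bfin_compl_infinite (r : ℝ) : (Bfin r)ᶜ.Infinite :=
  Od_infinite.mono (Od_subset_compl r)

lemma exists_perm_image (A B : Set ℕ) (hA : A.Infinite) (hA' : Aᶜ.Infinite)
    (hB : B.Infinite) (hB' : Bᶜ.Infinite) : ∃ π : Equiv.Perm ℕ, π '' A = B := by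
  have iA : Infinite ↥A := hA.to_subtype
  have iA' : Infinite ↥Aᶜ := hA'.to_subtype
  have iB : Infinite ↥B := hB.to_subtype
  have iB' : Infinite ↥Bᶜ := hB'.to_subtype
  obtain ⟨dA⟩ := nonempty_denumerable ↥A
  obtain ⟨dA'⟩ := nonempty_denumerable ↥Aᶜ
  obtain ⟨dB⟩ := nonempty_denumerable ↥B
  obtain ⟨dB'⟩ := nonempty_denumerable ↥Bᶜ
  let e : ↥A ≃ ↥B := (Denumerable.eqv ↥A).trans (Denumerable.eqv ↥B).symm
  let f : ↥Aᶜ ≃ ↥Bᶜ := (Denumerable.eqv ↥Aᶜ).trans (Denumerable.eqv ↥Bᶜ).symm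
  let π : Equiv.Perm ℕ :=
    ((Equiv.Set.sumCompl A).symm.trans (e.sumCongr f)).trans (Equiv.Set.sumCompl B)
  refine ⟨π, ?_⟩
  have hmem : ∀ x : ℕ, π x ∈ B ↔ x ∈ A := by
    intro x
    by_cases hx : x ∈ A
    · simp only [π, Equiv.trans_apply, Equiv.Set.sumCompl_symm_apply_of_mem hx,
        Equiv.sumCongr_apply, Sum.map_inl, Equiv.Set.sumCompl_apply_inl]
      exact ⟨fun _ => hx, fun _ => (e ⟨x, hx⟩).2⟩
    · simp only [π, Equiv.trans_apply, Equiv.Set.sumCompl_symm_apply_of_notMem hx,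
        Equiv.sumCongr_apply, Sum.map_inr, Equiv.Set.sumCompl_apply_inr]
      exact ⟨fun h => absurd h (f ⟨x, hx⟩).2, fun h => absurd h hx⟩
  ext y
  constructor
  · rintro ⟨x, hx, rfl⟩
    exact (hmem x).mpr hx
  · intro hy
    exact ⟨π.symm y, (hmem _).mp (by simpa using hy), by simp⟩


theorem stmt2 (A : Set ℕ) (hA : A.Infinite) (hA' : Aᶜ.Infinite)
    (r : ℝ) (hr : r ∈ Set.Icc (0 : ℝ) 1) :
    ∃ π : Equiv.Perm ℕ, dens (π '' A) r := by
  obtain ⟨hr0, hr1⟩ := hr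
  obtain ⟨π, hπ⟩ := exists_perm_image A (Bfin r) hA hA'
    (Bfin_infinite r) (Bfin_compl_infinite r)
  exact ⟨π, hπ ▸ dens_Bfin r hr0 hr1⟩
end

section
/- A series ∑ a_n of real numbers is potentially conditionally convergent (i.e., some rearrangement of it is conditionally convergent) if and only if a_n → 0, the sum of the nonnegative terms is +∞, and the sum of the nonpositive terms is -∞. -/
open Filter Topology Finset

namespace Stmt4Aux

variable (a : ℕ → ℝ) (p q : ℕ → ℕ)

/-- running total after taking `i` positive-indexed and `j` negative-indexed terms -/
noncomputable def g : ℕ × ℕ → ℝ :=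
  fun s => (∑ m ∈ Finset.range s.1, a (p m)) + ∑ m ∈ Finset.range s.2, a (q m)

noncomputable def step : ℕ × ℕ → ℕ × ℕ :=
  fun s => if g a p q s ≤ 0 then (s.1 + 1, s.2) else (s.1, s.2 + 1)

noncomputable def st : ℕ → ℕ × ℕ := fun k => (step a p q)^[k] (0, 0)

noncomputable def perm : ℕ → ℕ :=
  fun k => if g a p q (st a p q k) ≤ 0 then p (st a p q k).1 else q (st a p q k).2

lemma st_zero : st a p q 0 = (0, 0) := rfl

lemma st_succ (k : ℕ) : st a p q (k + 1) = step a p q (st a p q k) :=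
  Function.iterate_succ_apply' _ _ _

lemma sum_eq (k : ℕ) : ∑ n ∈ Finset.range k, a (perm a p q n) = g a p q (st a p q k) := by
  induction k with
  | zero => simp [st_zero, g]
  | succ k ih =>
    rw [Finset.sum_range_succ, ih, st_succ, perm, step]
    split_ifs with h <;>
      · show _ = g a p q _
        simp only [g, Finset.sum_range_succ]
        ring

lemma fst_mono : Monotone fun k => (st a p q k).1 := by
  apply monotone_nat_of_le_succ
  intro k
  rw [st_succ, step]
  split <;> simp

lemma snd_mono : Monotone fun k => (st a p q k).2 := by
  apply monotone_nat_of_le_succ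
  intro k
  rw [st_succ, step]
  split <;> simp

lemma fst_add_snd (k : ℕ) : (st a p q k).1 + (st a p q k).2 = k := by
  induction k with
  | zero => rfl
  | succ k ih =>
    rw [st_succ, step]
    split <;> simp <;> omega

lemma fst_le (k : ℕ) : (st a p q k).1 ≤ k := by
  have := fst_add_snd a p q k; omega

lemma fst_succ_le (k : ℕ) : (st a p q (k+1)).1 ≤ (st a p q k).1 + 1 := by
  rw [st_succ, step]; split <;> simp

lemma snd_succ_le (k : ℕ) : (st a p q (k+1)).2 ≤ (st a p q k).2 + 1 := by
  rw [st_succ, step]; split <;> simp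


lemma fst_tendsto (hbot : Tendsto (fun j => ∑ m ∈ Finset.range j, a (q m)) atTop atBot) :
    Tendsto (fun k => (st a p q k).1) atTop atTop := by
  by_contra hcon
  have hb : ∃ b, ∀ k, (st a p q k).1 ≤ b := by
    by_contra hb
    push_neg at hb
    exact hcon (tendsto_atTop_atTop_of_monotone (fst_mono a p q)
      (fun b => (hb b).imp fun k hk => hk.le))
  obtain ⟨b, hb⟩ := hb
  set f := fun k => (st a p q k).1 with hf
  have hne : (Set.range f).Nonempty := ⟨f 0, Set.mem_range_self 0⟩
  have hbdd : ∀ x ∈ Set.range f, x ≤ b := by rintro x ⟨k, rfl⟩; exact hb k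
  obtain ⟨K, hK⟩ := Nat.sSup_mem hne ⟨b, hbdd⟩
  have hconst : ∀ k, K ≤ k → f k = f K := by
    intro k hk
    refine le_antisymm ?_ (fst_mono a p q hk)
    rw [hK]
    exact le_csSup ⟨b, hbdd⟩ (Set.mem_range_self k)
  have hgpos : ∀ k, K ≤ k → ¬ g a p q (st a p q k) ≤ 0 := by
    intro k hk hg
    have h1 : f (k + 1) = f k + 1 := by
      simp only [hf, st_succ, step, if_pos hg]
    rw [hconst k hk, hconst (k+1) (hk.trans (Nat.le_succ k))] at h1
    omega
  have hsnd : ∀ k, K ≤ k → (st a p q k).2 = k - f K := by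
    intro k hk
    have h1 := fst_add_snd a p q k
    have h2 : (st a p q k).1 = f K := hconst k hk
    omega
  have htb : Tendsto (fun k => (∑ m ∈ Finset.range (f K), a (p m)) +
      ∑ m ∈ Finset.range (k - f K), a (q m)) atTop atBot := by
    apply tendsto_atBot_add_const_left
    exact hbot.comp (tendsto_sub_atTop_nat (f K))
  have := (htb.eventually (eventually_lt_atBot (0:ℝ))).and (eventually_ge_atTop K)
  obtain ⟨k, hk1, hk2⟩ := this.exists
  apply hgpos k hk2
  have : g a p q (st a p q k) = (∑ m ∈ Finset.range (f K), a (p m)) +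
      ∑ m ∈ Finset.range (k - f K), a (q m) := by
    simp only [g]
    rw [show (st a p q k).1 = f K from hconst k hk2, hsnd k hk2]
  rw [this]
  exact hk1.le

lemma snd_tendsto (htop : Tendsto (fun j => ∑ m ∈ Finset.range j, a (p m)) atTop atTop) :
    Tendsto (fun k => (st a p q k).2) atTop atTop := by
  by_contra hcon
  have hb : ∃ b, ∀ k, (st a p q k).2 ≤ b := by
    by_contra hb
    push_neg at hb
    exact hcon (tendsto_atTop_atTop_of_monotone (snd_mono a p q)
      (fun b => (hb b).imp fun k hk => hk.le))
  obtain ⟨b, hb⟩ := hb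
  set f := fun k => (st a p q k).2 with hf
  have hne : (Set.range f).Nonempty := ⟨f 0, Set.mem_range_self 0⟩
  have hbdd : ∀ x ∈ Set.range f, x ≤ b := by rintro x ⟨k, rfl⟩; exact hb k
  obtain ⟨K, hK⟩ := Nat.sSup_mem hne ⟨b, hbdd⟩
  have hconst : ∀ k, K ≤ k → f k = f K := by
    intro k hk
    refine le_antisymm ?_ (snd_mono a p q hk)
    rw [hK]
    exact le_csSup ⟨b, hbdd⟩ (Set.mem_range_self k)
  have hgpos : ∀ k, K ≤ k → g a p q (st a p q k) ≤ 0 := by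
    intro k hk
    by_contra hg
    have h1 : f (k + 1) = f k + 1 := by
      simp only [hf, st_succ, step, if_neg hg]
    rw [hconst k hk, hconst (k+1) (hk.trans (Nat.le_succ k))] at h1
    omega
  have hfst : ∀ k, K ≤ k → (st a p q k).1 = k - f K := by
    intro k hk
    have h1 := fst_add_snd a p q k
    have h2 : (st a p q k).2 = f K := hconst k hk
    omega
  have htb : Tendsto (fun k => (∑ m ∈ Finset.range (k - f K), a (p m)) +
      ∑ m ∈ Finset.range (f K), a (q m)) atTop atTop := by
    apply tendsto_atTop_add_const_right
    exact htop.comp (tendsto_sub_atTop_nat (f K))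
  have := (htb.eventually (eventually_gt_atTop (0:ℝ))).and (eventually_ge_atTop K)
  obtain ⟨k, hk1, hk2⟩ := this.exists
  have heq : g a p q (st a p q k) = (∑ m ∈ Finset.range (k - f K), a (p m)) +
      ∑ m ∈ Finset.range (f K), a (q m) := by
    simp only [g]
    rw [show (st a p q k).2 = f K from hconst k hk2, hfst k hk2]
  have := hgpos k hk2
  rw [heq] at this
  linarith


lemma exists_fst_incr (h : Tendsto (fun k => (st a p q k).1) atTop atTop) (m : ℕ) :
    ∃ k, (st a p q k).1 = m ∧ g a p q (st a p q k) ≤ 0 := by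
  classical
  have hex : ∃ k, m + 1 ≤ (st a p q k).1 :=
    (h.eventually (eventually_ge_atTop (m + 1))).exists
  obtain ⟨k', hk'⟩ : ∃ k', Nat.find hex = k' + 1 := by
    cases hfind : Nat.find hex with
    | zero =>
      exfalso
      have := Nat.find_spec hex
      rw [hfind] at this
      simp [st_zero] at this
    | succ n => exact ⟨n, rfl⟩
  have hk : m + 1 ≤ (st a p q (k' + 1)).1 := hk' ▸ Nat.find_spec hex
  have hk'lt : ¬ m + 1 ≤ (st a p q k').1 := Nat.find_min hex (by omega)
  have hle := fst_succ_le a p q k'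
  have hfst : (st a p q k').1 = m := by omega
  refine ⟨k', hfst, ?_⟩
  by_contra hg
  have : (st a p q (k' + 1)).1 = (st a p q k').1 := by
    rw [st_succ, step, if_neg hg]
  omega

lemma exists_snd_incr (h : Tendsto (fun k => (st a p q k).2) atTop atTop) (m : ℕ) :
    ∃ k, (st a p q k).2 = m ∧ ¬ g a p q (st a p q k) ≤ 0 := by
  classical
  have hex : ∃ k, m + 1 ≤ (st a p q k).2 :=
    (h.eventually (eventually_ge_atTop (m + 1))).exists
  obtain ⟨k', hk'⟩ : ∃ k', Nat.find hex = k' + 1 := by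
    cases hfind : Nat.find hex with
    | zero =>
      exfalso
      have := Nat.find_spec hex
      rw [hfind] at this
      simp [st_zero] at this
    | succ n => exact ⟨n, rfl⟩
  have hk : m + 1 ≤ (st a p q (k' + 1)).2 := hk' ▸ Nat.find_spec hex
  have hk'lt : ¬ m + 1 ≤ (st a p q k').2 := Nat.find_min hex (by omega)
  have hle := snd_succ_le a p q k'
  have hsnd : (st a p q k').2 = m := by omega
  refine ⟨k', hsnd, ?_⟩
  intro hg
  have : (st a p q (k' + 1)).2 = (st a p q k').2 := by
    rw [st_succ, step, if_pos hg]
  omega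

lemma perm_injective (hap : ∀ m, 0 < a (p m)) (haq : ∀ m, a (q m) ≤ 0)
    (hpinj : Function.Injective p) (hqinj : Function.Injective q) :
    Function.Injective (perm a p q) := by
  intro k k' hkk
  by_contra hne
  wlog h : k < k' generalizing k k'
  · exact this hkk.symm (Ne.symm hne) (by omega)
  have hk1 : k + 1 ≤ k' := h
  unfold perm at hkk
  split_ifs at hkk with h1 h2 h2
  · -- both positive branch
    have heq : (st a p q k).1 = (st a p q k').1 := hpinj hkk
    have hstep : (st a p q (k + 1)).1 = (st a p q k).1 + 1 := by
      rw [st_succ, step, if_pos h1]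
    have hmono : (st a p q (k + 1)).1 ≤ (st a p q k').1 := fst_mono a p q hk1
    omega
  · have h3 := hap (st a p q k).1
    have h4 := haq (st a p q k').2
    rw [← hkk] at h4
    linarith
  · have h3 := hap (st a p q k').1
    have h4 := haq (st a p q k).2
    rw [hkk] at h4
    linarith
  · have heq : (st a p q k).2 = (st a p q k').2 := hqinj hkk
    have hstep : (st a p q (k + 1)).2 = (st a p q k).2 + 1 := by
      rw [st_succ, step, if_neg h1]
    have hmono : (st a p q (k + 1)).2 ≤ (st a p q k').2 := snd_mono a p q hk1
    omega

lemma perm_surjective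
    (hpsurj : ∀ n, 0 < a n → ∃ m, p m = n) (hqsurj : ∀ n, ¬ 0 < a n → ∃ m, q m = n)
    (h1 : Tendsto (fun k => (st a p q k).1) atTop atTop)
    (h2 : Tendsto (fun k => (st a p q k).2) atTop atTop) :
    Function.Surjective (perm a p q) := by
  intro n
  by_cases hn : 0 < a n
  · obtain ⟨m, hm⟩ := hpsurj n hn
    obtain ⟨k, hk1, hk2⟩ := exists_fst_incr a p q h1 m
    exact ⟨k, by rw [perm, if_pos hk2, hk1, hm]⟩
  · obtain ⟨m, hm⟩ := hqsurj n hn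
    obtain ⟨k, hk1, hk2⟩ := exists_snd_incr a p q h2 m
    exact ⟨k, by rw [perm, if_neg hk2, hk1, hm]⟩


lemma tendsto_sum_zero (hap : ∀ m, 0 < a (p m)) (haq : ∀ m, a (q m) ≤ 0)
    (h1 : Tendsto (fun k => (st a p q k).1) atTop atTop)
    (h2 : Tendsto (fun k => (st a p q k).2) atTop atTop)
    (hterm : Tendsto (fun k => a (perm a p q k)) atTop (𝓝 0)) :
    Tendsto (fun N => ∑ n ∈ Finset.range N, a (perm a p q n)) atTop (𝓝 0) := by
  set T := fun N => ∑ n ∈ Finset.range N, a (perm a p q n) with hT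
  rw [Metric.tendsto_atTop]
  intro ε hε
  have hε2 : 0 < ε / 2 := by linarith
  obtain ⟨K, hK⟩ := (Metric.tendsto_atTop.1 hterm) (ε / 2) hε2
  have hKabs : ∀ k, K ≤ k → |a (perm a p q k)| < ε / 2 := by
    intro k hk
    have := hK k hk
    rwa [Real.dist_eq, sub_zero] at this
  have hsucc : ∀ k, T (k + 1) = T k + a (perm a p q k) := by
    intro k; simp [hT, Finset.sum_range_succ]
  have hgT : ∀ k, g a p q (st a p q k) = T k := fun k => (sum_eq a p q k).symm
  have hpos : ∀ k, T k ≤ 0 → 0 < a (perm a p q k) := by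
    intro k hk
    have hg : g a p q (st a p q k) ≤ 0 := by rw [hgT]; exact hk
    rw [perm, if_pos hg]; exact hap _
  have hneg : ∀ k, ¬ T k ≤ 0 → a (perm a p q k) ≤ 0 := by
    intro k hk
    have hg : ¬ g a p q (st a p q k) ≤ 0 := by rw [hgT]; exact hk
    rw [perm, if_neg hg]; exact haq _
  have hA : ∃ k0, K ≤ k0 ∧ |T k0| ≤ ε / 2 := by
    by_contra hcon
    push_neg at hcon
    rcases le_or_gt (T K) 0 with hc | hc
    · have hTK : T K < -(ε / 2) := by
        have h := hcon K le_rfl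
        rw [lt_abs] at h
        rcases h with h | h <;> linarith
      have hind : ∀ d, T (K + d) < -(ε / 2) := by
        intro d
        induction d with
        | zero => simpa using hTK
        | succ d ih =>
          have hle : T (K + d) ≤ 0 := by linarith
          have ht := hpos (K + d) hle
          have habs := (abs_lt.1 (hKabs (K + d) (by omega))).2
          have heq : T (K + d + 1) = T (K + d) + a (perm a p q (K + d)) := hsucc _
          have hlt : T (K + d + 1) < 0 := by
            rw [heq]; linarith
          have h := hcon (K + d + 1) (by omega)
          rw [lt_abs] at h
          rcases h with h | h
          · linarith
          · rw [show K + (d + 1) = K + d + 1 from by omega]; linarith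
      have hconst : ∀ d, (st a p q (K + d)).2 = (st a p q K).2 := by
        intro d
        induction d with
        | zero => rfl
        | succ d ih =>
          have hg : g a p q (st a p q (K + d)) ≤ 0 := by
            rw [hgT]
            have := hind d
            linarith
          rw [show K + (d + 1) = (K + d) + 1 from rfl, st_succ, step, if_pos hg]
          exact ih
      obtain ⟨k, hk1, hk2⟩ := ((h2.eventually
        (eventually_ge_atTop ((st a p q K).2 + 1))).and (eventually_ge_atTop K)).exists
      have hck := hconst (k - K)
      rw [show K + (k - K) = k from by omega] at hck
      
      omega
    · have hTK : ε / 2 < T K := by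
        have h := hcon K le_rfl
        rw [lt_abs] at h
        rcases h with h | h <;> linarith
      have hind : ∀ d, ε / 2 < T (K + d) := by
        intro d
        induction d with
        | zero => simpa using hTK
        | succ d ih =>
          have hle : ¬ T (K + d) ≤ 0 := by linarith
          have ht := hneg (K + d) hle
          have habs := (abs_lt.1 (hKabs (K + d) (by omega))).1
          have heq : T (K + d + 1) = T (K + d) + a (perm a p q (K + d)) := hsucc _
          have hgt : 0 < T (K + d + 1) := by
            rw [heq]; linarith
          have h := hcon (K + d + 1) (by omega)
          rw [lt_abs] at h
          rcases h with h | h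
          · rw [show K + (d + 1) = K + d + 1 from by omega]; linarith
          · linarith
      have hconst : ∀ d, (st a p q (K + d)).1 = (st a p q K).1 := by
        intro d
        induction d with
        | zero => rfl
        | succ d ih =>
          have hg : ¬ g a p q (st a p q (K + d)) ≤ 0 := by
            rw [hgT]
            have := hind d
            linarith
          rw [show K + (d + 1) = (K + d) + 1 from rfl, st_succ, step, if_neg hg]
          exact ih
      obtain ⟨k, hk1, hk2⟩ := ((h1.eventually
        (eventually_ge_atTop ((st a p q K).1 + 1))).and (eventually_ge_atTop K)).exists
      have hck := hconst (k - K)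
      rw [show K + (k - K) = k from by omega] at hck
      
      omega
  obtain ⟨k0, hk0K, hk0⟩ := hA
  have hB : ∀ d, |T (k0 + d)| ≤ ε / 2 := by
    intro d
    induction d with
    | zero => simpa using hk0
    | succ d ih =>
      have hKd : K ≤ k0 + d := by omega
      have habs := abs_lt.1 (hKabs (k0 + d) hKd)
      have hbnd := abs_le.1 ih
      have heq : T (k0 + (d + 1)) = T (k0 + d) + a (perm a p q (k0 + d)) := hsucc _
      rw [heq, abs_le]
      rcases le_or_gt (T (k0 + d)) 0 with hc | hc
      · have := hpos (k0 + d) hc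
        constructor <;> linarith
      · have := hneg (k0 + d) (by linarith)
        constructor <;> linarith
  refine ⟨k0, fun n hn => ?_⟩
  rw [Real.dist_eq, sub_zero]
  have := hB (n - k0)
  rw [show k0 + (n - k0) = n from by omega] at this
  linarith

end Stmt4Aux

open Stmt4Aux

lemma neg_min_eq' (x : ℝ) : -(min x 0) = max x 0 - x := by
  rcases le_total x 0 with h | h
  · rw [min_eq_left h, max_eq_right h]; ring
  · rw [min_eq_right h, max_eq_left h]; ring

lemma abs_eq_max_sub_min' (x : ℝ) : |x| = max x 0 - min x 0 := by
  rcases le_total x 0 with h | h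
  · rw [min_eq_left h, max_eq_right h, abs_of_nonpos h]; ring
  · rw [min_eq_right h, max_eq_left h, abs_of_nonneg h]; ring

lemma summable_abs_of_max (b : ℕ → ℝ) (s : ℝ)
    (hs : Tendsto (fun N => ∑ n ∈ Finset.range N, b n) atTop (𝓝 s))
    (hmax : Summable fun n => max (b n) 0) : Summable fun n => |b n| := by
  have ht := hmax.hasSum.tendsto_sum_nat
  have hneg : Tendsto (fun N => ∑ n ∈ Finset.range N, -(min (b n) 0)) atTop
      (𝓝 ((∑' n, max (b n) 0) - s)) := by
    have h2 := ht.sub hs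
    convert h2 using 1
    funext N
    rw [← Finset.sum_sub_distrib]
    exact Finset.sum_congr rfl fun n _ => neg_min_eq' (b n)
  have hmono : Monotone fun N => ∑ n ∈ Finset.range N, -(min (b n) 0) := by
    apply monotone_nat_of_le_succ
    intro n
    rw [Finset.sum_range_succ]
    exact le_add_of_nonneg_right (neg_nonneg.2 (min_le_right _ _))
  have hsneg : Summable fun n => -(min (b n) 0) :=
    summable_of_sum_range_le (fun n => neg_nonneg.2 (min_le_right _ _))
      (fun N => hmono.ge_of_tendsto hneg N)
  have hmin : Summable fun n => min (b n) 0 := by simpa using hsneg.neg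
  exact (hmax.sub hmin).congr fun n => (abs_eq_max_sub_min' (b n)).symm

lemma summable_abs_of_min (b : ℕ → ℝ) (s : ℝ)
    (hs : Tendsto (fun N => ∑ n ∈ Finset.range N, b n) atTop (𝓝 s))
    (hmin : Summable fun n => min (b n) 0) : Summable fun n => |b n| := by
  have ht := hmin.hasSum.tendsto_sum_nat
  have hmaxt : Tendsto (fun N => ∑ n ∈ Finset.range N, max (b n) 0) atTop
      (𝓝 (s - ∑' n, min (b n) 0)) := by
    have h2 := hs.sub ht
    convert h2 using 1
    funext N
    rw [← Finset.sum_sub_distrib]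
    refine Finset.sum_congr rfl fun n _ => ?_
    have := neg_min_eq' (b n)
    linarith
  have hmono : Monotone fun N => ∑ n ∈ Finset.range N, max (b n) 0 := by
    apply monotone_nat_of_le_succ
    intro n
    rw [Finset.sum_range_succ]
    exact le_add_of_nonneg_right (le_max_right _ _)
  have hmax : Summable fun n => max (b n) 0 :=
    summable_of_sum_range_le (fun n => le_max_right _ _)
      (fun N => hmono.ge_of_tendsto hmaxt N)
  exact (hmax.sub hmin).congr fun n => (abs_eq_max_sub_min' (b n)).symm

theorem stmt4 (a : ℕ → ℝ) :
    (∃ π : Equiv.Perm ℕ,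
      (∃ s : ℝ, Tendsto (fun N => ∑ n ∈ Finset.range N, a (π n)) atTop (𝓝 s)) ∧
      ¬ Summable (fun n => |a (π n)|)) ↔
    (Tendsto a atTop (𝓝 0) ∧
     Tendsto (fun N => ∑ n ∈ Finset.range N, max (a n) 0) atTop atTop ∧
     Tendsto (fun N => ∑ n ∈ Finset.range N, min (a n) 0) atTop atBot) := by
  constructor
  · rintro ⟨π, ⟨s, hs⟩, hns⟩
    have hterm : Tendsto (fun n => a (π n)) atTop (𝓝 0) := by
      have h1 : Tendsto (fun N => ∑ n ∈ Finset.range (N + 1), a (π n)) atTop (𝓝 s) :=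
        hs.comp (tendsto_add_atTop_nat 1)
      have h2 := h1.sub hs
      rw [sub_self] at h2
      simpa [Finset.sum_range_succ] using h2
    have ha0 : Tendsto a atTop (𝓝 0) := by
      have hπs : Tendsto (fun n => (π.symm n : ℕ)) atTop atTop := by
        rw [← Nat.cofinite_eq_atTop]
        exact π.symm.injective.tendsto_cofinite
      have hcomp := hterm.comp hπs
      have heq : ((fun n => a (π n)) ∘ fun n => (π.symm n : ℕ)) = a := by
        funext n; simp
      rwa [heq] at hcomp
    have hnmax : ¬ Summable fun n => max (a n) 0 := by
      intro h
      exact hns (summable_abs_of_max (fun n => a (π n)) s hs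
        ((Equiv.summable_iff π (f := fun n => max (a n) 0)).2 h))
    have hnmin : ¬ Summable fun n => min (a n) 0 := by
      intro h
      exact hns (summable_abs_of_min (fun n => a (π n)) s hs
        ((Equiv.summable_iff π (f := fun n => min (a n) 0)).2 h))
    refine ⟨ha0, ?_, ?_⟩
    · exact (not_summable_iff_tendsto_nat_atTop_of_nonneg (fun n => le_max_right _ _)).1 hnmax
    · have hnneg : ¬ Summable fun n => -(min (a n) 0) := fun h => hnmin (by simpa using h.neg)
      have h3 := (not_summable_iff_tendsto_nat_atTop_of_nonneg
        (fun n => neg_nonneg.2 (min_le_right (a n) 0))).1 hnneg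
      have h4 : Tendsto (fun N => -∑ n ∈ Finset.range N, -(min (a n) 0)) atTop atBot :=
        tendsto_neg_atBot_iff.2 h3
      simpa [Finset.sum_neg_distrib] using h4
  · rintro ⟨h0, htop, hbot⟩
    classical
    have hnmax : ¬ Summable fun n => max (a n) 0 := fun h =>
      not_tendsto_atTop_of_tendsto_nhds h.hasSum.tendsto_sum_nat htop
    have hnmin : ¬ Summable fun n => min (a n) 0 := fun h =>
      not_tendsto_atBot_of_tendsto_nhds h.hasSum.tendsto_sum_nat hbot
    set P : ℕ → Prop := fun n => 0 < a n with hP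
    have hPinf : {n | P n}.Infinite := by
      by_contra hfin
      rw [Set.not_infinite] at hfin
      obtain ⟨B, hB⟩ := hfin.bddAbove
      apply hnmax
      have hconst : ∀ N, B + 1 ≤ N →
          ∑ n ∈ Finset.range N, max (a n) 0 = ∑ n ∈ Finset.range (B + 1), max (a n) 0 := by
        intro N hN
        refine (Finset.sum_subset (Finset.range_subset_range.2 hN) fun x _ hx => ?_).symm
        rw [Finset.mem_range, not_lt] at hx
        have hnp : ¬ P x := fun hp => by
          have := hB hp
          omega
        exact max_eq_right (le_of_not_gt hnp)
      exfalso
      obtain ⟨N, hN1, hN2⟩ := ((htop.eventually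
        (eventually_gt_atTop (∑ n ∈ Finset.range (B + 1), max (a n) 0))).and
        (eventually_ge_atTop (B + 1))).exists
      rw [hconst N hN2] at hN1
      exact lt_irrefl _ hN1
    have hQinf : {n | ¬ P n}.Infinite := by
      by_contra hfin
      rw [Set.not_infinite] at hfin
      obtain ⟨B, hB⟩ := hfin.bddAbove
      have hconst : ∀ N, B + 1 ≤ N →
          ∑ n ∈ Finset.range N, min (a n) 0 = ∑ n ∈ Finset.range (B + 1), min (a n) 0 := by
        intro N hN
        refine (Finset.sum_subset (Finset.range_subset_range.2 hN) fun x _ hx => ?_).symm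
        rw [Finset.mem_range, not_lt] at hx
        have hp : P x := by
          by_contra hnp
          have := hB hnp
          omega
        exact min_eq_right (le_of_lt hp)
      obtain ⟨N, hN1, hN2⟩ := ((hbot.eventually
        (eventually_lt_atBot (∑ n ∈ Finset.range (B + 1), min (a n) 0))).and
        (eventually_ge_atTop (B + 1))).exists
      rw [hconst N hN2] at hN1
      exact lt_irrefl _ hN1
    set p : ℕ → ℕ := Nat.nth P with hp
    set q : ℕ → ℕ := Nat.nth (fun n => ¬ P n) with hq
    have hap : ∀ m, 0 < a (p m) := fun m => Nat.nth_mem_of_infinite hPinf m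
    have haq : ∀ m, ¬ 0 < a (q m) := fun m => Nat.nth_mem_of_infinite hQinf m
    have haq' : ∀ m, a (q m) ≤ 0 := fun m => le_of_not_gt (haq m)
    have hpinj : Function.Injective p := Nat.nth_injective hPinf
    have hqinj : Function.Injective q := Nat.nth_injective hQinf
    have hpsurj : ∀ n, 0 < a n → ∃ m, p m = n := fun n hn =>
      ⟨Nat.count P n, Nat.nth_count hn⟩
    have hqsurj : ∀ n, ¬ 0 < a n → ∃ m, q m = n := fun n hn =>
      ⟨Nat.count (fun n => ¬ P n) n, Nat.nth_count hn⟩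
    -- equivs onto the subtypes
    have hpmem : ∀ m, p m ∈ {n | P n} := fun m => Nat.nth_mem_of_infinite hPinf m
    have hqmem : ∀ m, q m ∈ {n | ¬ P n} := fun m => Nat.nth_mem_of_infinite hQinf m
    let e : ℕ ≃ {n // n ∈ {n | P n}} := Equiv.ofBijective (fun m => ⟨p m, hpmem m⟩)
      ⟨fun x y hxy => hpinj (congrArg Subtype.val hxy),
       fun x => by
        obtain ⟨m, hm⟩ := hpsurj x.1 x.2
        exact ⟨m, Subtype.ext hm⟩⟩
    let e' : ℕ ≃ {n // n ∈ {n | ¬ P n}} := Equiv.ofBijective (fun m => ⟨q m, hqmem m⟩)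
      ⟨fun x y hxy => hqinj (congrArg Subtype.val hxy),
       fun x => by
        obtain ⟨m, hm⟩ := hqsurj x.1 x.2
        exact ⟨m, Subtype.ext hm⟩⟩
    have hsp : ¬ Summable fun m => a (p m) := by
      intro h
      apply hnmax
      have h1 : Summable fun x : {n | P n} => a ↑x := (Equiv.summable_iff e).1 h
      have h1' : Summable fun x : {n | P n} => max (a ↑x) 0 :=
        h1.congr fun x => (max_eq_left (le_of_lt x.2)).symm
      have h2 : Summable fun x : ↥({n | P n}ᶜ) => max (a ↑x) 0 := by
        have : (fun x : ↥({n | P n}ᶜ) => max (a ↑x) 0) = fun _ => (0 : ℝ) := by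
          funext x
          exact max_eq_right (le_of_not_gt x.2)
        rw [this]
        exact summable_zero
      exact (summable_subtype_and_compl.1 ⟨h1', h2⟩)
    have hsq : ¬ Summable fun m => a (q m) := by
      intro h
      apply hnmin
      have h1 : Summable fun x : {n | ¬ P n} => a ↑x := (Equiv.summable_iff e').1 h
      have h1' : Summable fun x : {n | ¬ P n} => min (a ↑x) 0 :=
        h1.congr fun x => (min_eq_left (le_of_not_gt x.2)).symm
      have h2 : Summable fun x : ↥({n | ¬ P n}ᶜ) => min (a ↑x) 0 := by
        have : (fun x : ↥({n | ¬ P n}ᶜ) => min (a ↑x) 0) = fun _ => (0 : ℝ) := by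
          funext x
          have hx : P ↑x := not_not.1 x.2
          exact min_eq_right (le_of_lt hx)
        rw [this]
        exact summable_zero
      exact (summable_subtype_and_compl.1 ⟨h1', h2⟩)
    have hptop : Tendsto (fun i => ∑ m ∈ Finset.range i, a (p m)) atTop atTop :=
      (not_summable_iff_tendsto_nat_atTop_of_nonneg (fun m => (hap m).le)).1 hsp
    have hqbot : Tendsto (fun j => ∑ m ∈ Finset.range j, a (q m)) atTop atBot := by
      have hnq : ¬ Summable fun m => -(a (q m)) := fun h => hsq (by simpa using h.neg)
      have h3 := (not_summable_iff_tendsto_nat_atTop_of_nonneg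
        (fun m => neg_nonneg.2 (haq' m))).1 hnq
      have h4 : Tendsto (fun j => -∑ m ∈ Finset.range j, -(a (q m))) atTop atBot :=
        tendsto_neg_atBot_iff.2 h3
      simpa [Finset.sum_neg_distrib] using h4
    have h1 := fst_tendsto a p q hqbot
    have h2 := snd_tendsto a p q hptop
    have hbij : Function.Bijective (perm a p q) :=
      ⟨perm_injective a p q hap haq' hpinj hqinj,
       perm_surjective a p q hpsurj hqsurj h1 h2⟩
    refine ⟨Equiv.ofBijective _ hbij, ⟨0, ?_⟩, ?_⟩
    · have hpatop : Tendsto (perm a p q) atTop atTop := by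
        rw [← Nat.cofinite_eq_atTop]
        exact hbij.1.tendsto_cofinite
      have hterm : Tendsto (fun k => a (perm a p q k)) atTop (𝓝 0) := h0.comp hpatop
      exact tendsto_sum_zero a p q hap haq' h1 h2 hterm
    · intro habs
      have hsa : Summable fun n => |a n| :=
        (Equiv.summable_iff (Equiv.ofBijective _ hbij) (f := fun n => |a n|)).1 habs
      exact hnmax (Summable.of_nonneg_of_le (fun n => le_max_right _ _)
        (fun n => max_le (le_abs_self _) (abs_nonneg _)) hsa)
end

section
/- For any permutation π of ℕ, there exists a permutation σ of ℕ such that σ[{0,...,n-1}] = {0,...,n-1} for infinitely many n, and σ[{0,...,n-1}] = π[{0,...,n-1}] for infinitely many n. -/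
open Filter Topology

namespace Stmt5Aux

variable (π : Equiv.Perm ℕ)

def bseq : ℕ → ℕ
  | 0 => 0
  | k+1 => max (bseq k + 1)
      (((Finset.range (bseq k)).image (if Even k then (π : ℕ → ℕ) else (π.symm : ℕ → ℕ))).sup id + 1)

lemma bseq_lt (k : ℕ) : bseq π k < bseq π (k+1) :=
  lt_of_lt_of_le (Nat.lt_succ_self _) (le_max_left _ _)

lemma bseq_mono : StrictMono (bseq π) := strictMono_nat_of_lt_succ (bseq_lt π)

def Sset (k : ℕ) : Finset ℕ :=
  if Even k then (Finset.range (bseq π k)).image π else Finset.range (bseq π k)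

lemma card_Sset (k : ℕ) : (Sset π k).card = bseq π k := by
  unfold Sset
  split <;> simp [Finset.card_image_of_injective _ π.injective]

lemma Sset_subset (k : ℕ) : Sset π k ⊆ Sset π (k+1) := by
  by_cases hk : Even k
  · have hk1 : ¬ Even (k+1) := by simp [Nat.even_add_one, hk]
    unfold Sset
    rw [if_pos hk, if_neg hk1]
    intro x hx
    have hle : x ≤ ((Finset.range (bseq π k)).image
        (if Even k then (π : ℕ → ℕ) else (π.symm : ℕ → ℕ))).sup id := by
      rw [if_pos hk]
      exact Finset.le_sup (f := id) hx
    have : x < bseq π (k+1) := by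
      have : x + 1 ≤ bseq π (k+1) := le_trans (by omega) (le_max_right _ _)
      omega
    simpa using this
  · have hk1 : Even (k+1) := Nat.even_add_one.mpr hk
    unfold Sset
    rw [if_neg hk, if_pos hk1]
    intro x hx
    have hx' : π.symm x ∈ (Finset.range (bseq π k)).image
        (if Even k then (π : ℕ → ℕ) else (π.symm : ℕ → ℕ)) := by
      rw [if_neg hk]
      exact Finset.mem_image_of_mem _ hx
    have hle : π.symm x ≤ _ := Finset.le_sup (f := id) hx'
    have hlt : π.symm x < bseq π (k+1) := by
      have : π.symm x + 1 ≤ bseq π (k+1) := le_trans (by omega) (le_max_right _ _)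
      omega
    refine Finset.mem_image.mpr ⟨π.symm x, Finset.mem_range.mpr hlt, ?_⟩
    simp

lemma Sset_mono : Monotone (Sset π) := monotone_nat_of_le_succ (Sset_subset π)

lemma le_bseq (k : ℕ) : k ≤ bseq π k := (bseq_mono π).le_apply

lemma mem_Sset (m : ℕ) : m ∈ Sset π (2*m+1) := by
  have hodd : ¬ Even (2*m+1) := by simp [parity_simps]
  unfold Sset
  rw [if_neg hodd]
  have := le_bseq π (2*m+1)
  exact Finset.mem_range.mpr (by omega)

def Tset (k : ℕ) : Finset ℕ := Sset π (k+1) \ Sset π k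

lemma card_Tset (k : ℕ) : (Tset π k).card = bseq π (k+1) - bseq π k := by
  rw [Tset, Finset.card_sdiff_of_subset (Sset_subset π k), card_Sset, card_Sset]

lemma Tset_disjoint {j k : ℕ} (h : j < k) : Disjoint (Tset π j) (Tset π k) := by
  have h1 : Tset π j ⊆ Sset π k :=
    le_trans (Finset.sdiff_subset) (Sset_mono π h)
  exact Finset.disjoint_left.mpr fun x hx hx' => (Finset.mem_sdiff.mp hx').2 (h1 hx)

def lev (n : ℕ) : ℕ := Nat.findGreatest (fun k => bseq π k ≤ n) n

lemma bseq_lev_le (n : ℕ) : bseq π (lev π n) ≤ n :=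
  Nat.findGreatest_spec (P := fun k => bseq π k ≤ n) (Nat.zero_le n) (by simp [bseq])

lemma lt_bseq_lev_succ (n : ℕ) : n < bseq π (lev π n + 1) := by
  by_cases h : lev π n + 1 ≤ n
  · have := Nat.findGreatest_is_greatest (P := fun k => bseq π k ≤ n)
      (show lev π n < lev π n + 1 by omega) h
    omega
  · have := le_bseq π (lev π n + 1)
    omega

lemma lev_eq {K n : ℕ} (h1 : bseq π K ≤ n) (h2 : n < bseq π (K+1)) : lev π n = K := by
  rcases lt_trichotomy (lev π n) K with h | h | h
  · have : bseq π (lev π n + 1) ≤ bseq π K := (bseq_mono π).monotone (by omega)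
    have := lt_bseq_lev_succ π n
    omega
  · exact h
  · have : bseq π (K+1) ≤ bseq π (lev π n) := (bseq_mono π).monotone (by omega)
    have := bseq_lev_le π n
    omega

lemma sub_lt_card (n : ℕ) : n - bseq π (lev π n) < bseq π (lev π n + 1) - bseq π (lev π n) := by
  have h1 := bseq_lev_le π n
  have h2 := lt_bseq_lev_succ π n
  omega

noncomputable def f (n : ℕ) : ℕ :=
  ((Tset π (lev π n)).orderIsoOfFin (card_Tset π (lev π n))
    ⟨n - bseq π (lev π n), sub_lt_card π n⟩ : ℕ)

lemma f_mem (n : ℕ) : f π n ∈ Tset π (lev π n) :=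
  ((Tset π (lev π n)).orderIsoOfFin (card_Tset π (lev π n)) _).2

lemma f_eq {K n : ℕ} (h1 : bseq π K ≤ n) (h2 : n < bseq π (K+1)) :
    f π n = ((Tset π K).orderIsoOfFin (card_Tset π K) ⟨n - bseq π K, by omega⟩ : ℕ) := by
  have hl : lev π n = K := lev_eq π h1 h2
  subst hl
  rfl

lemma f_inj : Function.Injective (f π) := by
  intro m n h
  have hm := f_mem π m
  have hn := f_mem π n
  rw [h] at hm
  have hlev : lev π m = lev π n := by
    rcases lt_trichotomy (lev π m) (lev π n) with h' | h' | h'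
    · exact absurd hn (Finset.disjoint_left.mp (Tset_disjoint π h') hm)
    · exact h'
    · exact absurd hm (Finset.disjoint_left.mp (Tset_disjoint π h') hn)
  have hm1 : bseq π (lev π n) ≤ m := hlev ▸ bseq_lev_le π m
  have hm2 : m < bseq π (lev π n + 1) := hlev ▸ lt_bseq_lev_succ π m
  have hn1 := bseq_lev_le π n
  have hn2 := lt_bseq_lev_succ π n
  rw [f_eq π hm1 hm2, f_eq π hn1 hn2] at h
  have h' := ((Tset π (lev π n)).orderIsoOfFin (card_Tset π (lev π n))).injective
    (Subtype.coe_injective h)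
  have h2 : m - bseq π (lev π n) = n - bseq π (lev π n) := congrArg Fin.val h'
  omega

lemma image_Ico (K : ℕ) :
    (Finset.Ico (bseq π K) (bseq π (K+1))).image (f π) = Tset π K := by
  apply Finset.eq_of_subset_of_card_le
  · intro x hx
    rcases Finset.mem_image.mp hx with ⟨n, hn, rfl⟩
    rcases Finset.mem_Ico.mp hn with ⟨h1, h2⟩
    have : lev π n = K := lev_eq π h1 h2
    exact this ▸ f_mem π n
  · rw [card_Tset, Finset.card_image_of_injective _ (f_inj π), Nat.card_Ico]

lemma image_range (K : ℕ) :
    (Finset.range (bseq π K)).image (f π) = Sset π K := by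
  induction K with
  | zero => simp [bseq, Sset]
  | succ K ih =>
    have hsplit : Finset.range (bseq π (K+1)) =
        Finset.range (bseq π K) ∪ Finset.Ico (bseq π K) (bseq π (K+1)) := by
      rw [Finset.range_eq_Ico, Finset.range_eq_Ico]
      exact (Finset.Ico_union_Ico_eq_Ico (Nat.zero_le _) (le_of_lt (bseq_lt π K))).symm
    rw [hsplit, Finset.image_union, ih, image_Ico]
    rw [Tset, Finset.union_sdiff_of_subset (Sset_subset π K)]

lemma f_surj : Function.Surjective (f π) := by
  intro m
  have hm := mem_Sset π m
  rw [← image_range π (2*m+1)] at hm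
  rcases Finset.mem_image.mp hm with ⟨n, _, hn⟩
  exact ⟨n, hn⟩

noncomputable def σ : Equiv.Perm ℕ := Equiv.ofBijective (f π) ⟨f_inj π, f_surj π⟩

lemma image_range_σ (K : ℕ) :
    (Finset.range (bseq π K)).image (σ π) = Sset π K := by
  rw [← image_range π K]
  rfl

end Stmt5Aux

theorem stmt5 (π : Equiv.Perm ℕ) :
    ∃ σ : Equiv.Perm ℕ,
      {n : ℕ | (Finset.range n).image σ = Finset.range n}.Infinite ∧
      {n : ℕ | (Finset.range n).image σ = (Finset.range n).image π}.Infinite := by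
  refine ⟨Stmt5Aux.σ π, ?_, ?_⟩
  · apply Set.infinite_of_injective_forall_mem
      (f := fun j : ℕ => Stmt5Aux.bseq π (2*j+1))
    · intro a b h
      have := (Stmt5Aux.bseq_mono π).injective h
      omega
    · intro j
      have := Stmt5Aux.image_range_σ π (2*j+1)
      have hodd : ¬ Even (2*j+1) := by simp [parity_simps]
      rw [Stmt5Aux.Sset, if_neg hodd] at this
      exact this
  · apply Set.infinite_of_injective_forall_mem
      (f := fun j : ℕ => Stmt5Aux.bseq π (2*j))
    · intro a b h
      have := (Stmt5Aux.bseq_mono π).injective h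
      omega
    · intro j
      have := Stmt5Aux.image_range_σ π (2*j)
      have heven : Even (2*j) := even_two_mul j
      rw [Stmt5Aux.Sset, if_pos heven] at this
      exact this
end

section
/- Let (I_n) be an interval partition of ℕ with |I_{n+1}| ≥ n · ∑_{i≤n} |I_i| for all n. Let 0 < j < k-1 and let A ⊆ ℕ be a (j,k)-set, i.e., |A ∩ I_n|/|I_n| ∈ [j/k, (j+1)/k] for all but finitely many n. If π is a permutation of ℕ fixing each I_n setwise such that for infinitely many n the image π[A ∩ I_n] is an initial segment of I_n, then the upper density of π[A] equals 1; in particular π[A] has no asymptotic density. -/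
open Filter Topology

open scoped Classical in
noncomputable def cntIn (A : Set ℕ) (a b : ℕ) : ℕ :=
  ((Finset.Ico a b).filter (fun m => m ∈ A)).card

open scoped Classical

lemma loc (e : ℕ → ℕ) (he0 : e 0 = 0) (heM : StrictMono e) (m : ℕ) :
    ∃ i, e i ≤ m ∧ m < e (i + 1) := by
  set P : ℕ → Prop := fun i => e i ≤ m with hP
  have h0 : P 0 := by simp [hP, he0]
  have hspec : P (Nat.findGreatest P m) :=
    Nat.findGreatest_spec (m := 0) (Nat.zero_le m) h0
  refine ⟨Nat.findGreatest P m, hspec, ?_⟩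
  by_contra h
  push_neg at h
  have hle : Nat.findGreatest P m + 1 ≤ m := le_trans (heM.id_le _) h
  exact Nat.findGreatest_is_greatest (Nat.lt_succ_self _) hle h

lemma permlt (e : ℕ → ℕ) (he0 : e 0 = 0) (heM : StrictMono e) (π : Equiv.Perm ℕ)
    (hfix : ∀ n m : ℕ, m ∈ Set.Ico (e n) (e (n + 1)) → π m ∈ Set.Ico (e n) (e (n + 1)))
    (N m : ℕ) (hm : m < e N) : π m < e N := by
  obtain ⟨i, hi1, hi2⟩ := loc e he0 heM m
  have hiN : i + 1 ≤ N := by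
    have : i < N := by
      by_contra h
      push_neg at h
      exact absurd (le_trans (heM.monotone h) hi1) (not_le.mpr hm)
    omega
  exact lt_of_lt_of_le (hfix i m ⟨hi1, hi2⟩).2 (heM.monotone hiN)

lemma permlt' (e : ℕ → ℕ) (he0 : e 0 = 0) (heM : StrictMono e) (π : Equiv.Perm ℕ)
    (hfix : ∀ n m : ℕ, m ∈ Set.Ico (e n) (e (n + 1)) → π m ∈ Set.Ico (e n) (e (n + 1)))
    (N m : ℕ) (hm : m < e N) : π.symm m < e N := by
  set S := Finset.range (e N) with hS
  have hsub : S.image π ⊆ S := by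
    intro x hx
    simp only [hS, Finset.mem_image, Finset.mem_range] at hx ⊢
    obtain ⟨a, ha, rfl⟩ := hx
    exact permlt e he0 heM π hfix N a ha
  have hcard : S.card ≤ (S.image π).card := by
    rw [Finset.card_image_of_injective _ π.injective]
  have heq : S.image π = S := Finset.eq_of_subset_of_card_le hsub hcard
  have hmem : m ∈ S.image π := by rw [heq]; exact Finset.mem_range.mpr hm
  obtain ⟨a, ha, hπa⟩ := Finset.mem_image.mp hmem
  have : π.symm m = a := by rw [← hπa]; simp
  rw [this]; exact Finset.mem_range.mp ha

lemma permIco (e : ℕ → ℕ) (he0 : e 0 = 0) (heM : StrictMono e) (π : Equiv.Perm ℕ)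
    (hfix : ∀ n m : ℕ, m ∈ Set.Ico (e n) (e (n + 1)) → π m ∈ Set.Ico (e n) (e (n + 1)))
    (n m : ℕ) (hm : m ∈ Set.Ico (e n) (e (n + 1))) : π.symm m ∈ Set.Ico (e n) (e (n + 1)) := by
  refine ⟨?_, permlt' e he0 heM π hfix (n + 1) m hm.2⟩
  by_contra h
  push_neg at h
  have := (permlt e he0 heM π hfix n (π.symm m) h)
  simp only [Equiv.apply_symm_apply] at this
  exact absurd this (not_lt.mpr hm.1)

lemma cnt_le (A : Set ℕ) (n : ℕ) : cnt A n ≤ n := by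
  calc cnt A n ≤ (Finset.range n).card := Finset.card_filter_le _ _
  _ = n := Finset.card_range n

lemma cnt_split (A : Set ℕ) (a b : ℕ) (hab : a ≤ b) :
    cnt A b ≤ a + cntIn A a b := by
  unfold cnt cntIn
  rw [Finset.range_eq_Ico, ← Finset.Ico_union_Ico_eq_Ico (Nat.zero_le a) hab,
    Finset.filter_union]
  calc _ ≤ ((Finset.Ico 0 a).filter (fun m => m ∈ A)).card
        + ((Finset.Ico a b).filter (fun m => m ∈ A)).card := Finset.card_union_le _ _
  _ ≤ a + _ := by
      gcongr
      calc _ ≤ (Finset.Ico 0 a).card := Finset.card_filter_le _ _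
      _ = a := by simp

lemma cntIn_image (A : Set ℕ) (π : Equiv.Perm ℕ) (a b : ℕ)
    (hf : ∀ m ∈ Set.Ico a b, π m ∈ Set.Ico a b)
    (hb : ∀ m ∈ Set.Ico a b, π.symm m ∈ Set.Ico a b) :
    cntIn (π '' A) a b = cntIn A a b := by
  unfold cntIn
  apply Finset.card_bij (fun m _ => π.symm m)
  · intro m hm
    simp only [Finset.mem_filter, Finset.mem_Ico] at hm ⊢
    obtain ⟨hm1, x, hx, hxm⟩ := hm
    have := hb m ⟨hm1.1, hm1.2⟩
    refine ⟨⟨this.1, this.2⟩, ?_⟩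
    subst hxm; simpa using hx
  · intro m1 h1 m2 h2 h
    exact π.symm.injective h
  · intro m hm
    simp only [Finset.mem_filter, Finset.mem_Ico] at hm
    refine ⟨π m, ?_, by simp⟩
    simp only [Finset.mem_filter, Finset.mem_Ico]
    have := hf m ⟨hm.1.1, hm.1.2⟩
    exact ⟨⟨this.1, this.2⟩, ⟨m, hm.2, rfl⟩⟩

lemma cntIn_eq_ncard (A : Set ℕ) (a b : ℕ) :
    cntIn A a b = (A ∩ Set.Ico a b).ncard := by
  unfold cntIn
  rw [← Set.ncard_coe_finset]
  congr 1
  ext m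
  simp [and_comm]

lemma cnt_ge_Ico (B : Set ℕ) (a t : ℕ) (h : Set.Ico a t ⊆ B) :
    t - a ≤ cnt B t := by
  unfold cnt
  have hsub : Finset.Ico a t ⊆ (Finset.range t).filter (fun m => m ∈ B) := by
    intro m hm
    simp only [Finset.mem_Ico] at hm
    simp only [Finset.mem_filter, Finset.mem_range]
    exact ⟨hm.2, h ⟨hm.1, hm.2⟩⟩
  calc t - a = (Finset.Ico a t).card := (Nat.card_Ico a t).symm
  _ ≤ _ := Finset.card_le_card hsub

theorem stmt6 (e : ℕ → ℕ) (he0 : e 0 = 0) (heM : StrictMono e)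
    (hlen : ∀ n : ℕ, n * (∑ i ∈ Finset.range (n + 1), (e (i + 1) - e i)) ≤ e (n + 2) - e (n + 1))
    (j k : ℕ) (hj : 0 < j) (hjk : j + 1 < k) (A : Set ℕ)
    (hA : ∀ᶠ n in atTop,
      (j : ℝ) / k ≤ (cntIn A (e n) (e (n + 1)) : ℝ) / ((e (n + 1) - e n : ℕ) : ℝ) ∧
      (cntIn A (e n) (e (n + 1)) : ℝ) / ((e (n + 1) - e n : ℕ) : ℝ) ≤ ((j : ℝ) + 1) / k)
    (π : Equiv.Perm ℕ)
    (hfix : ∀ n m : ℕ, m ∈ Set.Ico (e n) (e (n + 1)) → π m ∈ Set.Ico (e n) (e (n + 1)))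
    (hinit : {n : ℕ | ∃ t ≤ e (n + 1),
        π '' (A ∩ Set.Ico (e n) (e (n + 1))) = Set.Ico (e n) t}.Infinite) :
    Filter.limsup (fun n => (cnt (π '' A) n : ℝ) / n) atTop = 1 ∧
    ¬ ∃ r : ℝ, dens (π '' A) r := by
  set f : ℕ → ℝ := fun n => (cnt (π '' A) n : ℝ) / n with hfdef
  obtain ⟨N₀, hN₀⟩ := eventually_atTop.mp hA
  have hkR : (0:ℝ) < k := by
    have : 0 < k := by omega
    exact_mod_cast this
  have hjR : (1:ℝ) ≤ j := by exact_mod_cast hj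
  have hen_lt : ∀ n, e n < e (n + 1) := fun n => heM (Nat.lt_succ_self n)
  have hid : ∀ n, n ≤ e n := fun n => heM.id_le n
  have htel : ∀ m, ∑ i ∈ Finset.range m, (e (i + 1) - e i) = e m := by
    intro m
    induction m with
    | zero => simp [he0]
    | succ m ih => rw [Finset.sum_range_succ, ih, Nat.add_sub_cancel' (hen_lt m).le]
  have hL' : ∀ n, 1 ≤ n → (n - 1) * e n ≤ e (n + 1) - e n := by
    intro n hn
    obtain ⟨m, rfl⟩ : ∃ m, n = m + 1 := ⟨n - 1, by omega⟩
    have := hlen m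
    rw [htel (m + 1)] at this
    simpa using this
  have hLpos : ∀ n : ℕ, (0:ℝ) < ((e (n + 1) - e n : ℕ) : ℝ) := by
    intro n
    have := hen_lt n
    have : 0 < e (n + 1) - e n := by omega
    exact_mod_cast this
  have hLE : ∀ n : ℕ, 2 ≤ n → ((n:ℝ) - 1) * (e n : ℝ) ≤ ((e (n + 1) - e n : ℕ) : ℝ) := by
    intro n hn
    have h := hL' n (by omega)
    have h2 : ((n - 1) * e n : ℕ) ≤ ((e (n + 1) - e n : ℕ)) := h
    have h3 : (((n - 1) * e n : ℕ) : ℝ) ≤ ((e (n + 1) - e n : ℕ) : ℝ) := by exact_mod_cast h2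
    rwa [Nat.cast_mul, Nat.cast_sub (by omega : 1 ≤ n), Nat.cast_one] at h3
  -- cntIn of image equals cntIn
  have hcntInIm : ∀ n, cntIn (π '' A) (e n) (e (n + 1)) = cntIn A (e n) (e (n + 1)) :=
    fun n => cntIn_image A π (e n) (e (n + 1)) (hfix n) (permIco e he0 heM π hfix n)
  have hf01 : ∀ n, 0 ≤ f n ∧ f n ≤ 1 := by
    intro n
    rcases Nat.eq_zero_or_pos n with h | h
    · subst h; simp [hfdef]
    · have hnR : (0:ℝ) < n := by exact_mod_cast h
      constructor
      · positivity
      · rw [hfdef]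
        rw [div_le_one hnR]
        exact_mod_cast cnt_le _ n
  have hbdd : IsBoundedUnder (· ≤ ·) atTop f :=
    ⟨1, eventually_map.mpr (Eventually.of_forall fun n => (hf01 n).2)⟩
  have hcobdd : IsCoboundedUnder (· ≤ ·) atTop f :=
    isCoboundedUnder_le_of_le atTop (fun n => (hf01 n).1)
  -- frequently close to 1
  have hkey : ∀ ε : ℝ, 0 < ε → ∃ᶠ m in atTop, 1 - ε ≤ f m := by
    intro ε hε
    rw [frequently_atTop]
    intro M
    obtain ⟨n, hnS, hn⟩ := hinit.exists_gt (max M (max N₀ (⌈(k:ℝ)/ε⌉₊ + 1)))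
    have hnM : M ≤ n := le_trans (le_max_left _ _) hn.le
    have hnN₀ : N₀ ≤ n := le_trans (le_trans (le_max_left _ _) (le_max_right _ _)) hn.le
    have hnbig : ⌈(k:ℝ)/ε⌉₊ + 1 < n :=
      lt_of_le_of_lt (le_trans (le_max_right _ _) (le_max_right _ _)) hn
    have hn2 : 2 ≤ n := by omega
    obtain ⟨t, htle, hteq⟩ := hnS
    have hcard : cntIn A (e n) (e (n + 1)) = t - e n := by
      rw [cntIn_eq_ncard, ← Set.ncard_image_of_injective _ π.injective, hteq,
        ← Finset.coe_Ico, Set.ncard_coe_finset, Nat.card_Ico]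
    have hclow : (j:ℝ) / k * ((e (n + 1) - e n : ℕ) : ℝ) ≤ (cntIn A (e n) (e (n + 1)) : ℝ) := by
      have h := (hN₀ n hnN₀).1
      rw [le_div_iff₀ (hLpos n)] at h
      exact h
    have hcpos : 0 < cntIn A (e n) (e (n + 1)) := by
      by_contra h
      push_neg at h
      have h0 : cntIn A (e n) (e (n + 1)) = 0 := by omega
      rw [h0] at hclow
      have : (0:ℝ) < (j:ℝ) / k * ((e (n + 1) - e n : ℕ) : ℝ) := by
        apply mul_pos (div_pos (by linarith) hkR) (hLpos n)
      simp only [Nat.cast_zero] at hclow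
      linarith
    have hent : e n < t := by omega
    have hsub : Set.Ico (e n) t ⊆ π '' A := by
      intro x hx
      have hx2 : x ∈ π '' (A ∩ Set.Ico (e n) (e (n + 1))) := by rw [hteq]; exact hx
      obtain ⟨a, ha, rfl⟩ := hx2
      exact ⟨a, ha.1, rfl⟩
    have hcnt : (t - e n : ℕ) ≤ cnt (π '' A) t := cnt_ge_Ico _ _ _ hsub
    refine ⟨t, le_trans (le_trans hnM (hid n)) hent.le, ?_⟩
    -- real computation
    set E : ℝ := (e n : ℝ) with hE
    set L : ℝ := ((e (n + 1) - e n : ℕ) : ℝ) with hLdef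
    set C : ℝ := (cntIn A (e n) (e (n + 1)) : ℝ) with hC
    have hTE : (t:ℝ) = E + C := by
      have : t = e n + cntIn A (e n) (e (n + 1)) := by omega
      rw [this]; push_cast; ring
    have hEpos : (0:ℝ) < E := by
      have h0 : 0 < e n := lt_of_lt_of_le (by omega) (hid n)
      rw [hE]
      exact_mod_cast h0
    have hTpos : (0:ℝ) < (t:ℝ) := by rw [hTE]; have : (0:ℝ) ≤ C := Nat.cast_nonneg _; linarith
    have hLEn : ((n:ℝ) - 1) * E ≤ L := hLE n hn2
    have hceil : (k:ℝ) / ε ≤ (n:ℝ) - 1 := by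
      have h1 : (k:ℝ) / ε ≤ (⌈(k:ℝ)/ε⌉₊ : ℝ) := Nat.le_ceil _
      have h2 : (⌈(k:ℝ)/ε⌉₊ : ℝ) + 2 ≤ (n:ℝ) := by exact_mod_cast (by omega : ⌈(k:ℝ)/ε⌉₊ + 2 ≤ n)
      linarith
    have hken : (k:ℝ) ≤ ε * ((n:ℝ) - 1) := by
      rw [div_le_iff₀ hε] at hceil
      linarith [hceil]
    -- E ≤ ε * t
    have hnn1 : (0:ℝ) ≤ (n:ℝ) - 1 := by
      have : (2:ℝ) ≤ (n:ℝ) := by exact_mod_cast hn2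
      linarith
    have hC0 : (0:ℝ) ≤ C := Nat.cast_nonneg _
    have hclow' : (j:ℝ) * L ≤ C * k := by
      rw [div_mul_eq_mul_div, div_le_iff₀ hkR] at hclow
      exact hclow
    have hEt : E ≤ ε * (t:ℝ) := by
      have hj0 : (0:ℝ) ≤ (j:ℝ) := by positivity
      have h8 : ((n:ℝ) - 1) * E ≤ C * k := by
        have ha : (j:ℝ) * (((n:ℝ) - 1) * E) ≤ (j:ℝ) * L :=
          mul_le_mul_of_nonneg_left hLEn hj0
        have hb : (1:ℝ) * (((n:ℝ) - 1) * E) ≤ (j:ℝ) * (((n:ℝ) - 1) * E) :=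
          mul_le_mul_of_nonneg_right hjR (mul_nonneg hnn1 hEpos.le)
        linarith [ha, hb, hclow']
      have h9 : (k:ℝ) * E ≤ (ε * ((n:ℝ) - 1)) * E := mul_le_mul_of_nonneg_right hken hEpos.le
      have h10 : ε * (((n:ℝ) - 1) * E) ≤ ε * (C * k) := mul_le_mul_of_nonneg_left h8 hε.le
      have h11 : E * k ≤ (ε * C) * k := by linarith [h9, h10]
      have hEC : E ≤ ε * C := le_of_mul_le_mul_right h11 hkR
      have hEE : 0 ≤ ε * E := mul_nonneg hε.le hEpos.le
      rw [hTE]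
      linarith [hEC, hEE]
    have hfinal : 1 - ε ≤ f t := by
      have hC_le : C ≤ (cnt (π '' A) t : ℝ) := by
        rw [hC, hcard]
        exact_mod_cast hcnt
      have hEdiv : E / t ≤ ε := (div_le_iff₀ hTpos).mpr hEt
      have hsplit : C / t + E / t = 1 := by
        rw [← add_div]
        rw [div_eq_one_iff_eq hTpos.ne']
        linarith [hTE]
      have hfrac : 1 - ε ≤ C / t := by linarith
      have hmono : C / t ≤ f t := by
        rw [hfdef]
        exact (div_le_div_iff_of_pos_right hTpos).mpr hC_le
      linarith
    exact hfinal
  have hub : limsup f atTop ≤ 1 :=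
    limsup_le_of_le hcobdd (Eventually.of_forall fun n => (hf01 n).2)
  have hlb : (1:ℝ) ≤ limsup f atTop := by
    apply le_of_forall_sub_le
    intro ε hε
    exact le_limsup_of_frequently_le (hkey ε hε) hbdd
  have hlim : limsup f atTop = 1 := le_antisymm hub hlb
  refine ⟨hlim, ?_⟩
  rintro ⟨r, hr⟩
  have hrf : Tendsto f atTop (𝓝 r) := hr
  have hr1 : r = 1 := by rw [← hlim, hrf.limsup_eq]
  subst hr1
  set d : ℝ := ((j:ℝ) + 1) / k with hd
  have hd1 : d < 1 := by
    rw [hd, div_lt_one hkR]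
    exact_mod_cast hjk
  have hd0 : 0 ≤ d := by positivity
  have hεd : 0 < (1 - d) / 2 := by linarith
  have hcomp : Tendsto (fun n => f (e (n + 1))) atTop (𝓝 1) := by
    apply hrf.comp
    exact (heM.comp (fun a b h => Nat.add_lt_add_right h 1 : StrictMono (fun n : ℕ => n + 1))).tendsto_atTop
  have h1 : ∀ᶠ n in atTop, 1 - (1 - d) / 2 < f (e (n + 1)) :=
    hcomp.eventually (eventually_gt_nhds (by linarith))
  have h2 : ∀ᶠ n in atTop, f (e (n + 1)) ≤ d + 1 / (n:ℝ) := by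
    filter_upwards [eventually_ge_atTop N₀, eventually_ge_atTop 2] with n hnN hn2
    set E : ℝ := (e n : ℝ) with hE
    set L : ℝ := ((e (n + 1) - e n : ℕ) : ℝ) with hLdef
    have hcup : (cntIn A (e n) (e (n + 1)) : ℝ) ≤ d * L := by
      have h := (hN₀ n hnN).2
      rw [div_le_iff₀ (hLpos n)] at h
      exact h
    have hcnt_up : (cnt (π '' A) (e (n + 1)) : ℝ) ≤ E + d * L := by
      have h := cnt_split (π '' A) (e n) (e (n + 1)) (hen_lt n).le
      rw [hcntInIm n] at h
      have h2 : (cnt (π '' A) (e (n + 1)) : ℝ) ≤ E + (cntIn A (e n) (e (n + 1)) : ℝ) := by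
        rw [hE]
        exact_mod_cast h
      linarith
    have hsum : (e (n + 1) : ℝ) = E + L := by
      rw [hLdef, hE, Nat.cast_sub (hen_lt n).le]; ring
    have hEpos : (0:ℝ) < E := by
      have h0 : 0 < e n := lt_of_lt_of_le (by omega) (hid n)
      rw [hE]
      exact_mod_cast h0
    have hLp : (0:ℝ) < L := hLpos n
    have hLEn : ((n:ℝ) - 1) * E ≤ L := hLE n hn2
    have hnR : (0:ℝ) < (n:ℝ) := by exact_mod_cast (by omega : 0 < n)
    rw [hfdef]
    simp only
    rw [hsum, div_le_iff₀ (by linarith)]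
    have hu : (1:ℝ) / n * n = 1 := by field_simp
    calc (cnt (π '' A) (e (n + 1)) : ℝ) ≤ E + d * L := hcnt_up
    _ ≤ (d + 1 / n) * (E + L) := by
        have hun : (0:ℝ) ≤ 1 / (n:ℝ) := by positivity
        have hA1 : (1/(n:ℝ)) * (((n:ℝ) - 1) * E) ≤ (1/(n:ℝ)) * L :=
          mul_le_mul_of_nonneg_left hLEn hun
        have hA2 : (1/(n:ℝ)) * ((n:ℝ) * E) = E := by field_simp
        have hA3 : 0 ≤ d * E := mul_nonneg hd0 hEpos.le
        linarith [hA1, hA2, hA3]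
  have h3 : ∀ᶠ n : ℕ in atTop, 1 / (n:ℝ) < (1 - d) / 2 :=
    tendsto_one_div_atTop_nhds_zero_nat.eventually (eventually_lt_nhds hεd)
  obtain ⟨n, hn1, hn2, hn3⟩ := (h1.and (h2.and h3)).exists
  linarith [hn2, hn3]
end

section
/- Let (x_n) and (y_n) be sequences of real numbers such that the asymptotic mean μ(x) = lim_N (x_0 + ... + x_{N-1})/N exists and equals m. Then there exists an infinite set A = {a_0 < a_1 < ...} ⊆ ℕ with infinite complement {b_0 < b_1 < ...} such that the sequence z defined by z_{b_n} = x_n and z_{a_n} = y_n has asymptotic mean m. -/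
open Filter Topology

def amean (x : ℕ → ℝ) (m : ℝ) : Prop :=
  Tendsto (fun N => (∑ n ∈ Finset.range N, x n) / (N : ℝ)) atTop (𝓝 m)

noncomputable section Aux

open scoped Classical

/-- cumulative absolute sums of `y` -/
def Uy (y : ℕ → ℝ) (j : ℕ) : ℝ := ∑ n ∈ Finset.range j, |y n|

lemma Uy_nonneg (y : ℕ → ℝ) (j : ℕ) : 0 ≤ Uy y j :=
  Finset.sum_nonneg fun _ _ => abs_nonneg _

/-- the sparse sequence of positions where `y` is inserted -/
def aa (y : ℕ → ℝ) : ℕ → ℕ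
  | 0 => 1 * (⌈Uy y 1⌉₊ + 1)
  | n + 1 => max (aa y n + 2) ((n + 2) ^ 2 * (⌈Uy y (n + 2)⌉₊ + 1))

lemma aa_lb (y : ℕ → ℝ) (n : ℕ) : (n + 1) ^ 2 * (⌈Uy y (n + 1)⌉₊ + 1) ≤ aa y n := by
  cases n with
  | zero => simp [aa]
  | succ k => exact le_max_right _ _

lemma aa_strictMono (y : ℕ → ℝ) : StrictMono (aa y) := by
  apply strictMono_nat_of_lt_succ
  intro n
  have : aa y n + 2 ≤ aa y (n + 1) := le_max_left _ _
  omega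

lemma aa_sq_le (y : ℕ → ℝ) (n : ℕ) : (n + 1) * (n + 1) ≤ aa y n := by
  have h := aa_lb y n
  have h2 : (n + 1) ^ 2 * 1 ≤ (n + 1) ^ 2 * (⌈Uy y (n + 1)⌉₊ + 1) :=
    Nat.mul_le_mul_left _ (by omega)
  have h3 : (n + 1) * (n + 1) = (n + 1) ^ 2 * 1 := by ring
  omega

lemma aa_gap (y : ℕ → ℝ) (m n : ℕ) : aa y m ≠ aa y n + 1 := by
  rcases le_or_gt m n with h | h
  · have := (aa_strictMono y).monotone h; omega
  · have h1 : aa y (n + 1) ≤ aa y m := (aa_strictMono y).monotone h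
    have h2 : aa y n + 2 ≤ aa y (n + 1) := le_max_left _ _
    omega

/-- the predicate "is a value of aa" and its complement -/
def Pa (y : ℕ → ℝ) (k : ℕ) : Prop := ∃ n, aa y n = k

def Qa (y : ℕ → ℝ) (k : ℕ) : Prop := ¬ Pa y k

lemma Qa_infinite (y : ℕ → ℝ) : (setOf (Qa y)).Infinite := by
  apply Set.infinite_of_injective_forall_mem (f := fun n => aa y n + 1)
  · intro i j h
    simp only at h
    exact (aa_strictMono y).injective (by omega)
  · intro n
    rintro ⟨k, hk⟩
    exact aa_gap y k n hk

lemma exists_le_aa (y : ℕ → ℝ) (N : ℕ) : ∃ n, N ≤ aa y n :=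
  ⟨N, (aa_strictMono y).le_apply⟩

/-- number of aa-values below N -/
def jj (y : ℕ → ℝ) (N : ℕ) : ℕ := Nat.find (exists_le_aa y N)

lemma jj_iff (y : ℕ → ℝ) {n N : ℕ} : n < jj y N ↔ aa y n < N := by
  constructor
  · intro h
    have := Nat.find_min (exists_le_aa y N) h
    omega
  · intro h
    by_contra hc
    push_neg at hc
    have h1 : N ≤ aa y (jj y N) := Nat.find_spec (exists_le_aa y N)
    have h2 : aa y (jj y N) ≤ aa y n := (aa_strictMono y).monotone hc
    omega

lemma jj_zero (y : ℕ → ℝ) : jj y 0 = 0 := by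
  by_contra h
  have : aa y 0 < 0 := (jj_iff y).mp (by omega)
  omega

lemma jj_succ_mem (y : ℕ → ℝ) {n₀ N : ℕ} (h : aa y n₀ = N) :
    jj y N = n₀ ∧ jj y (N + 1) = n₀ + 1 := by
  have h1 : ¬ (n₀ < jj y N) := fun hc => by have := (jj_iff y).mp hc; omega
  have h2 : ∀ n < n₀, n < jj y N := fun n hn =>
    (jj_iff y).mpr (by have := aa_strictMono y hn; omega)
  have h3 : jj y N = n₀ := by
    rcases Nat.eq_zero_or_pos n₀ with h0 | h0
    · omega
    · have := h2 (n₀ - 1) (by omega); omega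
  have h4 : n₀ < jj y (N + 1) := (jj_iff y).mpr (by omega)
  have h5 : ¬ (n₀ + 1 < jj y (N + 1)) := fun hc => by
    have ha := (jj_iff y).mp hc
    have hb : aa y n₀ < aa y (n₀ + 1) := aa_strictMono y (by omega)
    omega
  exact ⟨h3, by omega⟩

lemma jj_succ_not_mem (y : ℕ → ℝ) {N : ℕ} (h : ¬ Pa y N) : jj y (N + 1) = jj y N := by
  have h1 : ∀ n, n < jj y (N + 1) ↔ n < jj y N := by
    intro n
    rw [jj_iff, jj_iff]
    constructor
    · intro hn
      rcases Nat.lt_or_ge (aa y n) N with h2 | h2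
      · exact h2
      · exact absurd ⟨n, by omega⟩ h
    · omega
  have := h1 (jj y N)
  have := h1 (jj y (N + 1))
  omega

/-- number of non-aa-values below N -/
def cc (y : ℕ → ℝ) (N : ℕ) : ℕ := Nat.count (Qa y) N

lemma cc_succ (y : ℕ → ℝ) (N : ℕ) :
    cc y (N + 1) = cc y N + if Pa y N then 0 else 1 := by
  rw [cc, Nat.count_succ, cc, Qa]
  by_cases h : Pa y N <;> simp [h]

lemma cc_add_jj (y : ℕ → ℝ) (N : ℕ) : cc y N + jj y N = N := by
  induction N with
  | zero => simp [cc, jj_zero]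
  | succ N ih =>
    rw [cc_succ]
    by_cases h : Pa y N
    · obtain ⟨n₀, hn₀⟩ := h
      rw [if_pos ⟨n₀, hn₀⟩, (jj_succ_mem y hn₀).2]
      have := (jj_succ_mem y hn₀).1
      omega
    · rw [if_neg h, jj_succ_not_mem y h]
      omega

/-- the interleaved sequence -/
def zz (x y : ℕ → ℝ) (k : ℕ) : ℝ :=
  if h : Pa y k then y h.choose else x (cc y k)

lemma zz_aa (x y : ℕ → ℝ) (n : ℕ) : zz x y (aa y n) = y n := by
  have h : Pa y (aa y n) := ⟨n, rfl⟩
  rw [zz, dif_pos h]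
  congr 1
  exact (aa_strictMono y).injective h.choose_spec

lemma zz_sum (x y : ℕ → ℝ) (N : ℕ) :
    ∑ k ∈ Finset.range N, zz x y k =
      (∑ n ∈ Finset.range (cc y N), x n) + ∑ n ∈ Finset.range (jj y N), y n := by
  induction N with
  | zero => simp [cc, jj_zero]
  | succ N ih =>
    rw [Finset.sum_range_succ, ih]
    by_cases h : Pa y N
    · obtain ⟨n₀, hn₀⟩ := h
      have hj := jj_succ_mem y hn₀
      have hc : cc y (N + 1) = cc y N := by
        rw [cc_succ, if_pos ⟨n₀, hn₀⟩]
        omega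
      have hz : zz x y N = y n₀ := by rw [← hn₀, zz_aa]
      rw [hc, hj.2, Finset.sum_range_succ, hj.1, hz]
      ring
    · have hc : cc y (N + 1) = cc y N + 1 := by rw [cc_succ, if_neg h]
      have hz : zz x y N = x (cc y N) := by rw [zz, dif_neg h]
      rw [hc, jj_succ_not_mem y h, Finset.sum_range_succ, hz]
      ring

lemma jj_le_sqrt (y : ℕ → ℝ) (N : ℕ) : jj y N ≤ Nat.sqrt N := by
  rcases Nat.eq_zero_or_pos (jj y N) with h | h
  · omega
  · obtain ⟨t, ht⟩ : ∃ t, jj y N = t + 1 := ⟨jj y N - 1, by omega⟩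
    have h1 : aa y t < N := (jj_iff y).mp (by omega)
    have h2 := aa_sq_le y t
    rw [ht]
    exact Nat.le_sqrt.mpr (by omega)

lemma jj_tendsto (y : ℕ → ℝ) : Tendsto (jj y) atTop atTop := by
  apply tendsto_atTop_atTop.mpr
  intro M
  exact ⟨aa y M + 1, fun N hN => le_of_lt ((jj_iff y).mpr (by omega))⟩

lemma nat_sqrt_mul_self_le (N : ℕ) : Nat.sqrt N * Nat.sqrt N ≤ N := by
  have := Nat.sqrt_le' N
  have h : Nat.sqrt N ^ 2 = Nat.sqrt N * Nat.sqrt N := by ring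
  omega

lemma cc_tendsto (y : ℕ → ℝ) : Tendsto (cc y) atTop atTop := by
  apply tendsto_atTop_atTop.mpr
  intro M
  refine ⟨(M + 1) * (M + 1), fun N hN => ?_⟩
  have h1 := cc_add_jj y N
  have h2 := jj_le_sqrt y N
  set s := Nat.sqrt N with hs
  have h3 : s * s ≤ N := nat_sqrt_mul_self_le N
  have h4 : M + 1 ≤ s := Nat.le_sqrt.mpr hN
  have h5 : s + M ≤ s * s := by nlinarith
  omega

lemma sqrt_tendsto : Tendsto (fun N => Nat.sqrt N) atTop atTop := by
  apply tendsto_atTop_atTop.mpr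
  intro M
  exact ⟨M * M, fun N hN => Nat.le_sqrt.mpr hN⟩

lemma jj_div_tendsto (y : ℕ → ℝ) :
    Tendsto (fun N : ℕ => (jj y N : ℝ) / N) atTop (𝓝 0) := by
  have hg : Tendsto (fun N : ℕ => 1 / (Nat.sqrt N : ℝ)) atTop (𝓝 0) :=
    tendsto_one_div_atTop_nhds_zero_nat.comp sqrt_tendsto
  apply squeeze_zero_norm' _ hg
  filter_upwards [eventually_ge_atTop 1] with N hN
  have h1 : (0:ℝ) < N := by exact_mod_cast hN
  have hsp : 0 < Nat.sqrt N := Nat.sqrt_pos.mpr hN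
  have hsp' : (0:ℝ) < (Nat.sqrt N : ℝ) := by exact_mod_cast hsp
  have h2 : (jj y N : ℝ) ≤ Nat.sqrt N := by exact_mod_cast jj_le_sqrt y N
  have h3 : ((Nat.sqrt N : ℝ)) * (Nat.sqrt N) ≤ N := by exact_mod_cast nat_sqrt_mul_self_le N
  rw [Real.norm_eq_abs, abs_of_nonneg (by positivity)]
  rw [div_le_div_iff₀ h1 hsp']
  nlinarith

lemma cc_div_tendsto (y : ℕ → ℝ) :
    Tendsto (fun N : ℕ => (cc y N : ℝ) / N) atTop (𝓝 1) := by
  have h : Tendsto (fun N : ℕ => 1 - (jj y N : ℝ) / N) atTop (𝓝 (1 - 0)) :=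
    (tendsto_const_nhds (x := (1:ℝ))).sub (jj_div_tendsto y)
  rw [sub_zero] at h
  apply h.congr'
  filter_upwards [eventually_ge_atTop 1] with N hN
  have h1 : (0:ℝ) < N := by exact_mod_cast hN
  have h2 : (cc y N : ℝ) = N - jj y N := by
    have h3 := cc_add_jj y N
    have h4 : (cc y N : ℝ) + jj y N = N := by exact_mod_cast h3
    linarith
  field_simp [h2]
  linarith

lemma x_part (x y : ℕ → ℝ) (m : ℝ) (hx : amean x m) :
    Tendsto (fun N : ℕ => (∑ n ∈ Finset.range (cc y N), x n) / N) atTop (𝓝 m) := by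
  have h1 : Tendsto (fun N : ℕ =>
      (∑ n ∈ Finset.range (cc y N), x n) / (cc y N : ℝ)) atTop (𝓝 m) :=
    hx.comp (cc_tendsto y)
  have h2 := h1.mul (cc_div_tendsto y)
  rw [mul_one] at h2
  apply h2.congr'
  filter_upwards [(cc_tendsto y).eventually_ge_atTop 1, eventually_ge_atTop 1] with N hc hN
  have hc' : (0:ℝ) < cc y N := by exact_mod_cast hc
  have hN' : (0:ℝ) < N := by exact_mod_cast hN
  field_simp

lemma y_part (x y : ℕ → ℝ) :
    Tendsto (fun N : ℕ => (∑ n ∈ Finset.range (jj y N), y n) / N) atTop (𝓝 0) := by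
  have hg : Tendsto (fun N : ℕ => 1 / (jj y N : ℝ)) atTop (𝓝 0) :=
    tendsto_one_div_atTop_nhds_zero_nat.comp (jj_tendsto y)
  apply squeeze_zero_norm' _ hg
  filter_upwards [(jj_tendsto y).eventually_ge_atTop 1, eventually_ge_atTop 1] with N hj hN
  obtain ⟨t, ht⟩ : ∃ t, jj y N = t + 1 := ⟨jj y N - 1, by omega⟩
  have h1 : aa y t < N := (jj_iff y).mp (by omega)
  have h2 : ((t + 1 : ℕ) : ℝ) ^ 2 * ((⌈Uy y (t + 1)⌉₊ : ℝ) + 1) ≤ (aa y t : ℝ) := by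
    exact_mod_cast aa_lb y t
  push_cast at h2
  have hceil : (0:ℝ) ≤ (⌈Uy y (t + 1)⌉₊ : ℝ) := Nat.cast_nonneg _
  have hU : Uy y (t + 1) ≤ (⌈Uy y (t + 1)⌉₊ : ℝ) + 1 :=
    le_trans (Nat.le_ceil _) (by linarith)
  have hUnn := Uy_nonneg y (t + 1)
  have hN' : (0:ℝ) < N := by exact_mod_cast hN
  have ht0 : (0:ℝ) ≤ (t:ℝ) := Nat.cast_nonneg t
  have c0 : (0:ℝ) ≤ (t:ℝ) + 1 := by linarith
  have h3 : ((t:ℝ) + 1) * Uy y (t + 1) ≤ (aa y t : ℝ) := by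
    have s1 : ((t:ℝ) + 1) * Uy y (t + 1) ≤ ((t:ℝ) + 1) * ((⌈Uy y (t + 1)⌉₊ : ℝ) + 1) :=
      mul_le_mul_of_nonneg_left hU c0
    have s2 : ((t:ℝ) + 1) * ((⌈Uy y (t + 1)⌉₊ : ℝ) + 1) ≤
        ((t:ℝ) + 1) ^ 2 * ((⌈Uy y (t + 1)⌉₊ : ℝ) + 1) := by
      nlinarith [mul_nonneg ht0 (mul_nonneg c0 (by linarith : (0:ℝ) ≤ (⌈Uy y (t + 1)⌉₊ : ℝ) + 1))]
    linarith
  have habs : |∑ n ∈ Finset.range (t + 1), y n| ≤ Uy y (t + 1) :=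
    Finset.abs_sum_le_sum_abs _ _
  have haN : (aa y t : ℝ) ≤ N := by exact_mod_cast le_of_lt h1
  rw [Real.norm_eq_abs, abs_div, abs_of_pos hN', ht]
  rw [div_le_div_iff₀ hN' (by push_cast; linarith)]
  push_cast
  have s3 : |∑ n ∈ Finset.range (t + 1), y n| * ((t:ℝ) + 1) ≤
      Uy y (t + 1) * ((t:ℝ) + 1) := mul_le_mul_of_nonneg_right habs c0
  nlinarith

end Aux

theorem stmt15 (x y : ℕ → ℝ) (m : ℝ) (hx : amean x m) :
    ∃ a b : ℕ → ℕ, StrictMono a ∧ StrictMono b ∧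
      (∀ k : ℕ, (∃ n, a n = k) ↔ ¬ ∃ n, b n = k) ∧
      ∃ z : ℕ → ℝ, (∀ n, z (b n) = x n) ∧ (∀ n, z (a n) = y n) ∧ amean z m := by
  classical
  refine ⟨aa y, Nat.nth (Qa y), aa_strictMono y, Nat.nth_strictMono (Qa_infinite y), ?_, ?_⟩
  · intro k
    constructor
    · rintro hP ⟨n, hn⟩
      exact Nat.nth_mem_of_infinite (Qa_infinite y) n (hn ▸ hP)
    · intro h
      by_contra hP
      exact h ⟨Nat.count (Qa y) k, Nat.nth_count hP⟩
  · refine ⟨zz x y, ?_, zz_aa x y, ?_⟩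
    · intro n
      have hq : Qa y (Nat.nth (Qa y) n) := Nat.nth_mem_of_infinite (Qa_infinite y) n
      rw [zz, dif_neg hq, cc, Nat.count_nth_of_infinite (Qa_infinite y)]
    · unfold amean
      have h := (x_part x y m hx).add (y_part x y)
      rw [add_zero] at h
      apply h.congr
      intro N
      rw [zz_sum, add_div]
end

section
/- Let Y ⊆ ℝ with |Y| < 𝔠 (the cardinality of the continuum). Suppose ℱ is a family of permutations of ℕ such that for every conditionally convergent real series ∑ a_n there exist π ∈ ℱ and y ∈ Y with y ≠ ∑ a_n and ∑ a_{π(n)} = y. Then |ℱ| = 𝔠. -/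
open Filter Topology

/-- Our fixed conditionally convergent series with sum 0:
`1, -1, 1/2, -1/2, 1/3, -1/3, ...` -/
noncomputable def aux17 : ℕ → ℝ :=
  fun n => if n % 2 = 0 then 1 / (((n / 2 : ℕ) : ℝ) + 1) else -(1 / (((n / 2 : ℕ) : ℝ) + 1))

lemma aux17_sum (K : ℕ) :
    (∑ n ∈ Finset.range (2 * K), aux17 n) = 0 ∧
    (∑ n ∈ Finset.range (2 * K + 1), aux17 n) = 1 / (K + 1 : ℝ) := by
  induction K with
  | zero => simp [aux17]
  | succ K ih =>
    have h1 : aux17 (2 * K + 1) = -(1 / (K + 1 : ℝ)) := by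
      have : (2 * K + 1) % 2 = 1 := by omega
      have h2 : (2 * K + 1) / 2 = K := by omega
      simp [aux17, this, h2]
    have h2 : aux17 (2 * K + 2) = 1 / (K + 2 : ℝ) := by
      have : (2 * K + 2) % 2 = 0 := by omega
      have h2 : (2 * K + 2) / 2 = K + 1 := by
        omega
      simp [aux17, this, h2]
      ring_nf
    have e1 : 2 * (K + 1) = (2 * K + 1) + 1 := by ring
    have e2 : 2 * (K + 1) + 1 = (2 * K + 2) + 1 := by ring
    constructor
    · rw [e1, Finset.sum_range_succ, ih.2, h1]; ring
    · rw [e2, Finset.sum_range_succ, show (2*K+2) = 2*(K+1) by ring]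
      rw [show 2*(K+1) = (2*K+1)+1 by ring, Finset.sum_range_succ, ih.2, h1,
        show ((2*K+1)+1) = 2*K+2 by ring, h2]
      push_cast
      ring

lemma aux17_tendsto :
    Tendsto (fun N => ∑ n ∈ Finset.range N, aux17 n) atTop (𝓝 0) := by
  apply squeeze_zero_norm (a := fun N : ℕ => 2 * (1 / (N + 1 : ℝ)))
  · intro N
    rcases Nat.even_or_odd N with ⟨K, hK⟩ | ⟨K, hK⟩
    · have : N = 2 * K := by omega
      rw [this, (aux17_sum K).1]
      simp
      positivity
    · have : N = 2 * K + 1 := by omega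
      rw [this, (aux17_sum K).2]
      rw [Real.norm_eq_abs, abs_of_nonneg (by positivity)]
      have hK1 : ((2 * K + 1 : ℕ) : ℝ) + 1 = 2 * ((K : ℝ) + 1) := by push_cast; ring
      have h2 : (2 : ℝ) * (1 / (2 * ((K : ℝ) + 1))) = 1 / ((K : ℝ) + 1) := by
        have : ((K : ℝ) + 1) ≠ 0 := by positivity
        field_simp
      rw [hK1, h2]
  · have := tendsto_one_div_add_atTop_nhds_zero_nat.const_mul (2:ℝ)
    simpa using this

lemma aux17_not_abs_summable : ¬ Summable (fun n => |aux17 n|) := by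
  intro h
  have h1 : Summable (fun n : ℕ => 1 / ((n : ℝ) + 1)) := by
    apply h.of_nonneg_of_le (fun n => by positivity)
    intro n
    have habs : |aux17 n| = 1 / (((n / 2 : ℕ) : ℝ) + 1) := by
      unfold aux17
      split
      · rw [abs_of_nonneg (by positivity)]
      · rw [abs_neg, abs_of_nonneg (by positivity)]
    rw [habs]
    apply div_le_div_of_nonneg_left (by norm_num) (by positivity)
    have : (n / 2 : ℕ) ≤ n := Nat.div_le_self n 2
    have := (Nat.cast_le (α := ℝ)).2 this
    linarith
  have h2 : Summable (fun n : ℕ => 1 / (n : ℝ)) := by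
    rw [← summable_nat_add_iff 1]
    simpa using h1
  exact Real.not_summable_one_div_natCast h2

theorem stmt17 (Y : Set ℝ) (hY : Cardinal.mk Y < Cardinal.continuum)
    (F : Set (Equiv.Perm ℕ))
    (hF : ∀ (a : ℕ → ℝ) (s : ℝ),
      Tendsto (fun N => ∑ n ∈ Finset.range N, a n) atTop (𝓝 s) →
      ¬ Summable (fun n => |a n|) →
      ∃ π ∈ F, ∃ y ∈ Y, y ≠ s ∧
        Tendsto (fun N => ∑ n ∈ Finset.range N, a (π n)) atTop (𝓝 y)) :
    Cardinal.mk F = Cardinal.continuum := by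
  -- upper bound: F is a set of permutations of ℕ, and |Perm ℕ| ≤ |ℕ → ℕ| = 𝔠
  have hle : Cardinal.mk F ≤ Cardinal.continuum := by
    calc Cardinal.mk F ≤ Cardinal.mk (Equiv.Perm ℕ) := Cardinal.mk_set_le F
      _ ≤ Cardinal.mk (ℕ → ℕ) := Cardinal.mk_le_of_injective Equiv.coe_fn_injective
      _ = Cardinal.continuum := by
          rw [Cardinal.mk_arrow]
          simp only [Cardinal.mk_nat, Cardinal.lift_aleph0]
          rw [Cardinal.power_self_eq le_rfl, Cardinal.two_power_aleph0]
  rcases hle.lt_or_eq with hlt | heq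
  · exfalso
    -- for each c : ℝ, apply hF to the series (exp c) • aux17
    have key : ∀ c : ℝ, ∃ p : F × Y,
        (p.2 : ℝ) ≠ 0 ∧
        Tendsto (fun N => ∑ n ∈ Finset.range N, aux17 ((p.1 : Equiv.Perm ℕ) n))
          atTop (𝓝 ((p.2 : ℝ) / Real.exp c)) := by
      intro c
      set e := Real.exp c with he
      have he0 : e ≠ 0 := (Real.exp_pos c).ne'
      have h1 : Tendsto (fun N => ∑ n ∈ Finset.range N, e * aux17 n) atTop (𝓝 0) := by
        have := aux17_tendsto.const_mul e
        simpa [Finset.mul_sum] using this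
      have h2 : ¬ Summable (fun n => |e * aux17 n|) := by
        intro h
        apply aux17_not_abs_summable
        have : Summable (fun n => |e| * |aux17 n|) := by simpa [abs_mul] using h
        exact (summable_mul_left_iff (abs_ne_zero.mpr he0)).1 this
      obtain ⟨π, hπF, y, hyY, hy0, hten⟩ := hF (fun n => e * aux17 n) 0 h1 h2
      refine ⟨⟨⟨π, hπF⟩, ⟨y, hyY⟩⟩, hy0, ?_⟩
      have : Tendsto (fun N => e⁻¹ * ∑ n ∈ Finset.range N, e * aux17 (π n))
          atTop (𝓝 (e⁻¹ * y)) := hten.const_mul _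
      have heq2 : (fun N => e⁻¹ * ∑ n ∈ Finset.range N, e * aux17 (π n))
          = fun N => ∑ n ∈ Finset.range N, aux17 (π n) := by
        funext N
        rw [← Finset.mul_sum, ← mul_assoc, inv_mul_cancel₀ he0, one_mul]
      rw [heq2] at this
      simpa [div_eq_inv_mul] using this
    choose g hg using key
    have hinj : Function.Injective g := by
      intro c₁ c₂ hcc
      have h1 := (hg c₁).2
      have h2 := (hg c₂).2
      rw [hcc] at h1
      have := tendsto_nhds_unique h1 h2
      have hy0 := (hg c₂).1
      field_simp at this
      exact Real.exp_injective this.symm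
    have : Cardinal.continuum ≤ Cardinal.mk F * Cardinal.mk Y := by
      calc Cardinal.continuum = Cardinal.mk ℝ := Cardinal.mk_real.symm
        _ ≤ Cardinal.mk (F × Y) := Cardinal.mk_le_of_injective hinj
        _ = Cardinal.mk F * Cardinal.mk Y := by
            rw [Cardinal.mk_prod, Cardinal.lift_id, Cardinal.lift_id]
    exact absurd this (not_le.2 (Cardinal.mul_lt_of_lt Cardinal.aleph0_le_continuum hlt hY))
  · exact heq
end

section
/- Let g : ℕ → ℕ satisfy g(n) ≥ 2^n for all n ≥ n_0, and define a_0 = 0, a_{n+1} = 2^{a_n} for n < n_0 and a_{n+1} = g(a_n) for n ≥ n_0. Let π be a permutation of ℕ such that for all but finitely many n, a_{n+1} ∉ {π^{-1}(k) : k ≤ a_n}. Then d(π[{a_n : n ∈ ℕ}]) = 0 = d({a_n : n ∈ ℕ}). -/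
open Filter Topology

lemma log_div_tendsto (C : ℕ) :
    Tendsto (fun M : ℕ => ((Nat.log 2 M : ℝ) + C) / M) atTop (𝓝 0) := by
  have h1 : Tendsto (fun x : ℝ => Real.log x / x) atTop (𝓝 0) := by
    have := Real.tendsto_pow_log_div_mul_add_atTop 1 0 1 one_ne_zero
    simpa using this
  have h2 : Tendsto (fun M : ℕ => Real.log M / M) atTop (𝓝 0) :=
    h1.comp tendsto_natCast_atTop_atTop
  have h3 : Tendsto (fun M : ℕ => Real.logb 2 M / M + C / M) atTop (𝓝 0) := by
    have h := (h2.mul_const (Real.log 2)⁻¹).add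
      (tendsto_const_div_atTop_nhds_zero_nat (C : ℝ))
    rw [zero_mul, add_zero] at h
    have heq : (fun M : ℕ => Real.logb 2 M / M + (C : ℝ) / M)
        = fun M : ℕ => Real.log M / M * (Real.log 2)⁻¹ + (C : ℝ) / M := by
      funext M; rw [Real.logb]; ring
    rw [heq]; exact h
  refine squeeze_zero' ?_ ?_ h3
  · filter_upwards with M; positivity
  · filter_upwards [eventually_ge_atTop 1] with M hM
    have hnl : (Nat.log 2 M : ℝ) ≤ Real.logb 2 M := Real.natLog_le_logb M 2
    rw [← add_div]
    gcongr

lemma dens_zero_of_cnt_le (A : Set ℕ) (C : ℕ) (h : ∀ M, cnt A M ≤ Nat.log 2 M + C) :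
    dens A 0 := by
  refine squeeze_zero' ?_ ?_ (log_div_tendsto C)
  · filter_upwards with M; positivity
  · filter_upwards with M
    have h2 : (cnt A M : ℝ) ≤ (Nat.log 2 M : ℝ) + C := by exact_mod_cast h M
    gcongr

theorem stmt19 (g : ℕ → ℕ) (n0 : ℕ) (hg : ∀ n ≥ n0, 2 ^ n ≤ g n)
    (a : ℕ → ℕ) (ha0 : a 0 = 0)
    (ha : ∀ n : ℕ, a (n + 1) = if n < n0 then 2 ^ (a n) else g (a n))
    (π : Equiv.Perm ℕ)
    (hπ : ∀ᶠ n in atTop, ∀ k ≤ a n, π.symm k ≠ a (n + 1)) :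
    dens (π '' Set.range a) 0 ∧ dens (Set.range a) 0 := by
  classical
  have age : ∀ n, n ≤ a n := by
    intro n
    induction n with
    | zero => omega
    | succ n ih =>
      rw [ha n]
      have h2 : n + 1 ≤ 2 ^ (a n) :=
        le_trans (Nat.lt_two_pow_self (n := n)) (Nat.pow_le_pow_right (by norm_num) ih)
      split
      · exact h2
      · next hn =>
        exact le_trans h2 (le_trans (Nat.pow_le_pow_right (by norm_num) le_rfl)
          (hg (a n) (le_trans (le_of_not_gt hn) ih)))
  have apow : ∀ n, 2 ^ (a n) ≤ a (n + 1) := by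
    intro n
    rw [ha n]
    split
    · exact le_rfl
    · next hn => exact hg (a n) (le_trans (le_of_not_gt hn) (age n))
  have akey : ∀ n, 2 ^ n ≤ a (n + 1) := fun n =>
    le_trans (Nat.pow_le_pow_right (by norm_num) (age n)) (apow n)
  -- density of range a
  have cnt_bound : ∀ M, cnt (Set.range a) M ≤ Nat.log 2 M + 2 := by
    intro M
    have hsub : ((Finset.range M).filter (fun m => m ∈ Set.range a))
        ⊆ (Finset.range (Nat.log 2 M + 2)).image a := by
      intro m hm
      simp only [Finset.mem_filter, Finset.mem_range, Set.mem_range] at hm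
      obtain ⟨hmM, j, hj⟩ := hm
      simp only [Finset.mem_image, Finset.mem_range]
      refine ⟨j, ?_, hj⟩
      cases j with
      | zero => omega
      | succ i =>
        have h1 : 2 ^ i ≤ m := hj ▸ akey i
        have h2 : i ≤ Nat.log 2 M :=
          Nat.le_log_of_pow_le (by norm_num) (le_trans h1 (le_of_lt hmM))
        omega
    calc cnt (Set.range a) M ≤ ((Finset.range (Nat.log 2 M + 2)).image a).card :=
          Finset.card_le_card hsub
      _ ≤ (Finset.range (Nat.log 2 M + 2)).card := Finset.card_image_le
      _ = Nat.log 2 M + 2 := Finset.card_range _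
  obtain ⟨N0, hN0⟩ := eventually_atTop.mp hπ
  have cnt_bound2 : ∀ M, cnt (π '' Set.range a) M ≤ Nat.log 2 M + (N0 + 3) := by
    intro M
    have hsub : ((Finset.range M).filter (fun m => m ∈ π '' Set.range a))
        ⊆ (Finset.range (Nat.log 2 M + (N0 + 3))).image (fun j => π (a j)) := by
      intro m hm
      simp only [Finset.mem_filter, Finset.mem_range, Set.mem_image, Set.mem_range] at hm
      obtain ⟨hmM, x, ⟨j, hj⟩, hx⟩ := hm
      simp only [Finset.mem_image, Finset.mem_range]
      refine ⟨j, ?_, by rw [hj, hx]⟩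
      rcases lt_or_ge j (N0 + 2) with h | h
      · omega
      · obtain ⟨l, rfl⟩ : ∃ l, j = l + 1 + 1 := ⟨j - 2, by omega⟩
        have hi : N0 ≤ l + 1 := by omega
        have hne := hN0 (l + 1) hi m
        have hpm : π.symm m = a (l + 1 + 1) := by
          rw [← hx, hj, Equiv.symm_apply_apply]
        have hlt : a (l + 1) < m := by
          by_contra hle
          exact hne (le_of_not_gt hle) hpm
        have h1 : 2 ^ l ≤ a (l + 1) := akey l
        have h2 : l ≤ Nat.log 2 M :=
          Nat.le_log_of_pow_le (by norm_num) (by omega)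
        omega
    calc cnt (π '' Set.range a) M
        ≤ ((Finset.range (Nat.log 2 M + (N0 + 3))).image (fun j => π (a j))).card :=
          Finset.card_le_card hsub
      _ ≤ (Finset.range (Nat.log 2 M + (N0 + 3))).card := Finset.card_image_le
      _ = Nat.log 2 M + (N0 + 3) := Finset.card_range _
  exact ⟨dens_zero_of_cnt_le _ _ cnt_bound2, dens_zero_of_cnt_le _ _ cnt_bound⟩
end
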